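/- Let Z be a compact metric space of covering dimension n, F a finite group acting on Z by isometries, k ∈ ℕ, and U a finite F-equivariant collection of open subsets of Z such that any subcollection of more than k members has empty intersection of boundaries. Then for every δ > 0 there exists an open cover W of Z of dimension ≤ n such that: (a) every member of W has diameter < δ; (b) for each W ∈ W, the number of U ∈ U with W ⊄ U and U ∩ W ≠ ∅ is at most k; (c) W is F-equivariant (gW ∈ W for all g ∈ F, W ∈ W). -/

import Mathlib

set_option linter.unusedSectionVars false
set_option linter.unusedVariables false
set_option maxHeartbeats 4000000

open Set Pointwise
open Metric

/-- Covering dimension `≤ n`: every open cover has an open refinement in which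
every point lies in at most `n+1` members (valid characterization for metric spaces). -/
def CoverDimLE (X : Type*) [TopologicalSpace X] (n : ℕ) : Prop :=
  ∀ U : Set (Set X), (∀ u ∈ U, IsOpen u) → ⋃₀ U = Set.univ →
    ∃ V : Set (Set X), (∀ v ∈ V, IsOpen v) ∧ ⋃₀ V = Set.univ ∧
      (∀ v ∈ V, ∃ u ∈ U, v ⊆ u) ∧ ∀ x : X, {v ∈ V | x ∈ v}.encard ≤ n + 1

namespace Stmt17

variable {F : Type*} [Group F] [Finite F] {Z : Type*} [MetricSpace Z] [CompactSpace Z]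
  [MulAction F Z]

lemma dist_smul_eq (hiso : ∀ g : F, Isometry fun z : Z => g • z) (g : F) (x y : Z) :
    dist (g • x) (g • y) = dist x y :=
  (hiso g).dist_eq x y

lemma image_smul_eq (g : F) (s : Set Z) : (fun z : Z => g • z) '' s = g • s := rfl

lemma infEdist_smul (hiso : ∀ g : F, Isometry fun z : Z => g • z) (g : F) (x : Z) (s : Set Z) :
    EMetric.infEdist (g • x) (g • s) = EMetric.infEdist x s := by
  show Metric.infEDist _ _ = Metric.infEDist _ _
  rw [← image_smul_eq, Metric.infEDist_image (hiso g)]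

lemma infDist_smul (hiso : ∀ g : F, Isometry fun z : Z => g • z) (g : F) (x : Z) (s : Set Z) :
    infDist (g • x) (g • s) = infDist x s := by
  simp only [infDist]
  exact congrArg ENNReal.toReal (infEdist_smul hiso g x s)

lemma infDist_smul' (hiso : ∀ g : F, Isometry fun z : Z => g • z) (g : F) (x : Z) (s : Set Z) :
    infDist x (g • s) = infDist (g⁻¹ • x) s := by
  conv_lhs => rw [show x = g • (g⁻¹ • x) by simp]
  rw [infDist_smul hiso]

lemma infEdist_smul' (hiso : ∀ g : F, Isometry fun z : Z => g • z) (g : F) (x : Z) (s : Set Z) :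
    EMetric.infEdist x (g • s) = EMetric.infEdist (g⁻¹ • x) s := by
  conv_lhs => rw [show x = g • (g⁻¹ • x) by simp]
  rw [infEdist_smul hiso]

lemma diam_smul (hiso : ∀ g : F, Isometry fun z : Z => g • z) (g : F) (s : Set Z) :
    Metric.diam (g • s) = Metric.diam s := by
  simp only [Metric.diam]
  rw [← image_smul_eq, (hiso g).ediam_image]

lemma isOpen_smul_set (hiso : ∀ g : F, Isometry fun z : Z => g • z) (g : F) {s : Set Z}
    (h : IsOpen s) : IsOpen (g • s) := by
  have he : g • s = (fun z : Z => g⁻¹ • z) ⁻¹' s := by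
    ext x; simp [mem_smul_set_iff_inv_smul_mem]
  rw [he]
  exact h.preimage (hiso g⁻¹).continuous

lemma isClosed_smul_set (hiso : ∀ g : F, Isometry fun z : Z => g • z) (g : F) {s : Set Z}
    (h : IsClosed s) : IsClosed (g • s) := by
  have he : g • s = (fun z : Z => g⁻¹ • z) ⁻¹' s := by
    ext x; simp [mem_smul_set_iff_inv_smul_mem]
  rw [he]
  exact h.preimage (hiso g⁻¹).continuous

/-- counting helper -/
lemma encard_le_of_sub_image {α β : Type*} {T : Set β} {S : Set α} (f : α → β)
    (h : T ⊆ f '' S) : T.encard ≤ S.encard :=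
  le_trans (Set.encard_mono h) (Set.encard_image_le f S)

/-- Margin-adaptedness of a family of subsets of `A` relative to the subgroup `K`. -/
def MA (K : Subgroup F) (A : Set Z) (𝒮 : Set (Set Z)) (L : ℝ) : Prop :=
  ∀ K' : Subgroup F, K' ≤ K → ∀ s : Set Z, s ⊆ A → s.Nonempty →
    (∀ g ∈ K', g • s = s) → Metric.diam s < L →
      ∃ w ∈ 𝒮, (∀ g ∈ K', g • w = w) ∧ ∀ x ∈ A, Metric.infDist x s < L → x ∈ w

lemma MA.cover {K : Subgroup F} {A : Set Z} {𝒮 : Set (Set Z)} {L : ℝ} (hL : 0 < L)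
    (h : MA K A 𝒮 L) : A ⊆ ⋃₀ 𝒮 := by
  intro z hz
  obtain ⟨w, hw, -, hmarg⟩ := h ⊥ bot_le {z} (by simpa using hz) ⟨z, rfl⟩
    (by intro g hg; simp only [Subgroup.mem_bot] at hg; simp [hg]) (by simpa using hL)
  exact ⟨w, hw, hmarg z hz (by simpa using hL)⟩

end Stmt17

namespace Stmt17

variable {F : Type*} [Group F] [Finite F] {Z : Type*} [MetricSpace Z] [CompactSpace Z]
  [MulAction F Z]

/-- The orbit of a point under a subgroup. -/
def orbSet (K : Subgroup F) (y : Z) : Set Z := (fun g : F => g • y) '' (K : Set F)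

lemma mem_orbSet_self (K : Subgroup F) (y : Z) : y ∈ orbSet K y :=
  ⟨1, K.one_mem, one_smul F y⟩

lemma orbSet_nonempty (K : Subgroup F) (y : Z) : (orbSet K y).Nonempty :=
  ⟨y, mem_orbSet_self K y⟩

lemma orbSet_finite (K : Subgroup F) (y : Z) : (orbSet K y).Finite :=
  Set.Finite.image _ (Set.toFinite _)

lemma smul_orbSet (g : F) (K : Subgroup F) (y : Z) (hg : g ∈ K) :
    g • orbSet K y = orbSet K y := by
  ext x
  simp only [mem_smul_set_iff_inv_smul_mem, orbSet, Set.mem_image, SetLike.mem_coe]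
  constructor
  · rintro ⟨k, hk, hky⟩
    refine ⟨g * k, K.mul_mem hg hk, ?_⟩
    rw [mul_smul, hky, smul_inv_smul]
  · rintro ⟨k, hk, hky⟩
    exact ⟨g⁻¹ * k, K.mul_mem (K.inv_mem hg) hk, by rw [mul_smul, hky]⟩

lemma orbSet_subset {K : Subgroup F} {y : Z} {s : Set Z} (hy : y ∈ s)
    (hstab : ∀ g ∈ K, g • s = s) : orbSet K y ⊆ s := by
  rintro x ⟨k, hk, rfl⟩
  rw [← hstab k hk]
  exact smul_mem_smul_set hy

lemma smul_orbSet_conj (hiso : ∀ g : F, Isometry fun z : Z => g • z) (g : F) (K' : Subgroup F)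
    (y : Z) : ∃ K'' : Subgroup F, ((K'' : Set F) = (fun k => g * k * g⁻¹) '' (K' : Set F)) ∧
      g • orbSet K' y = orbSet K'' (g • y) := by
  refine ⟨Subgroup.map ((MulAut.conj g).toMonoidHom) K', ?_, ?_⟩
  · ext x
    simp only [SetLike.mem_coe, Subgroup.mem_map, Set.mem_image]
    constructor
    · rintro ⟨k, hk, rfl⟩; exact ⟨k, hk, rfl⟩
    · rintro ⟨k, hk, rfl⟩; exact ⟨k, hk, rfl⟩
  · apply Subset.antisymm
    · rintro x hx
      obtain ⟨x', hx', rfl⟩ := hx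
      obtain ⟨k, hk, rfl⟩ := hx'
      refine ⟨g * k * g⁻¹, ⟨k, hk, rfl⟩, ?_⟩
      show (g * k * g⁻¹) • (g • y) = g • ((fun g : F => g • y) k)
      simp only [mul_smul, inv_smul_smul]
    · rintro x ⟨c, hc, rfl⟩
      rw [SetLike.mem_coe, Subgroup.mem_map] at hc
      obtain ⟨k, hk, rfl⟩ := hc
      refine ⟨k • y, ⟨k, hk, rfl⟩, ?_⟩
      show g • k • y = ((MulAut.conj g).toMonoidHom k) • (g • y)
      have hcg : (MulAut.conj g).toMonoidHom k = g * k * g⁻¹ := rfl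
      rw [hcg]
      simp only [mul_smul, inv_smul_smul]

/-- Existence of a margin-adapted family of "orbit balls" at any scale. -/
lemma orbitBall (hiso : ∀ g : F, Isometry fun z : Z => g • z)
    (K : Subgroup F) (A : Set Z) (hAinv : ∀ g ∈ K, g • A = A) (ε : ℝ) (hε : 0 < ε) :
    ∃ 𝒪 : Set (Set Z),
      (∀ b ∈ 𝒪, ∃ O, IsOpen O ∧ b = O ∩ A) ∧
      (∀ g ∈ K, ∀ b ∈ 𝒪, g • b ∈ 𝒪) ∧
      (∀ b ∈ 𝒪, Metric.diam b < ε) ∧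
      MA K A 𝒪 (ε/100) := by
  classical
  set 𝒪 : Set (Set Z) := {b | ∃ (y : Z) (K' : Subgroup F), y ∈ A ∧ K' ≤ K ∧
    Metric.diam (orbSet K' y) < ε/4 ∧ b = {x ∈ A | infDist x (orbSet K' y) < ε/8}} with h𝒪
  have hAmem : ∀ g ∈ K, ∀ x, x ∈ A → g • x ∈ A := by
    intro g hg x hx
    rw [← hAinv g hg]; exact smul_mem_smul_set hx
  have hAiff : ∀ g ∈ K, ∀ x : Z, (g • x ∈ A ↔ x ∈ A) := by
    intro g hg x
    constructor
    · intro h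
      have := hAmem g⁻¹ (K.inv_mem hg) _ h
      simpa using this
    · exact hAmem g hg x
  refine ⟨𝒪, ?_, ?_, ?_, ?_⟩
  · rintro b ⟨y, K', hyA, hK', hd, rfl⟩
    refine ⟨{x | infDist x (orbSet K' y) < ε/8}, isOpen_lt (continuous_infDist_pt _) continuous_const, ?_⟩
    ext x; simp [and_comm]
  · rintro g hg b ⟨y, K', hyA, hK', hd, rfl⟩
    obtain ⟨K'', hK''c, hK''orb⟩ := smul_orbSet_conj hiso g K' y
    refine ⟨g • y, K'', hAmem g hg y hyA, ?_, ?_, ?_⟩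
    · intro c hc
      have : c ∈ (K'' : Set F) := hc
      rw [hK''c] at this
      obtain ⟨k, hk, rfl⟩ := this
      exact K.mul_mem (K.mul_mem hg (hK' hk)) (K.inv_mem hg)
    · rw [← hK''orb, diam_smul hiso]; exact hd
    · ext x
      simp only [mem_smul_set_iff_inv_smul_mem, Set.mem_setOf_eq, ← hK''orb,
        infDist_smul' hiso]
      exact and_congr_left' (hAiff g⁻¹ (K.inv_mem hg) x)
  · rintro b ⟨y, K', hyA, hK', hd, rfl⟩
    have hbd : ∀ p ∈ {x ∈ A | infDist x (orbSet K' y) < ε/8},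
        ∀ p' ∈ {x ∈ A | infDist x (orbSet K' y) < ε/8}, dist p p' ≤ ε/2 := by
      rintro p ⟨-, hp⟩ p' ⟨-, hp'⟩
      obtain ⟨a, ha, hpa⟩ := (infDist_lt_iff (orbSet_nonempty K' y)).1 hp
      obtain ⟨a', ha', hpa'⟩ := (infDist_lt_iff (orbSet_nonempty K' y)).1 hp'
      have haa' : dist a a' ≤ ε/4 :=
        le_trans (dist_le_diam_of_mem isBounded_of_compactSpace ha ha') (le_of_lt hd)
      calc dist p p' ≤ dist p a + dist a a' + dist a' p' := dist_triangle4 p a a' p'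
        _ ≤ ε/8 + ε/4 + ε/8 := by
            have := dist_comm a' p'
            nlinarith [hpa, hpa']
        _ = ε/2 := by ring
    calc Metric.diam _ ≤ ε/2 := diam_le_of_forall_dist_le (by linarith) hbd
      _ < ε := by linarith
  · intro K' hK' s hsA hsne hstab hsd
    set y₀ := hsne.some with hy₀
    have hy₀s : y₀ ∈ s := hsne.some_mem
    have horb_sub : orbSet K' y₀ ⊆ s := orbSet_subset hy₀s hstab
    have hod : Metric.diam (orbSet K' y₀) < ε/4 := by
      calc Metric.diam (orbSet K' y₀) ≤ Metric.diam s :=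
            diam_mono horb_sub isBounded_of_compactSpace
        _ < ε/100 := hsd
        _ < ε/4 := by linarith
    refine ⟨{x ∈ A | infDist x (orbSet K' y₀) < ε/8}, ⟨y₀, K', hsA hy₀s, hK', hod, rfl⟩, ?_, ?_⟩
    · intro g hg
      have horb : g • orbSet K' y₀ = orbSet K' y₀ := smul_orbSet g K' y₀ hg
      ext x
      simp only [mem_smul_set_iff_inv_smul_mem, Set.mem_setOf_eq]
      have hinf : infDist (g⁻¹ • x) (orbSet K' y₀) = infDist x (orbSet K' y₀) := by
        conv_rhs => rw [← horb, infDist_smul' hiso]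
      rw [hinf]
      have hKg : g ∈ K := hK' hg
      exact and_congr_left' (hAiff g⁻¹ (K.inv_mem hKg) x)
    · intro x hxA hxs
      obtain ⟨y, hy, hxy⟩ := (infDist_lt_iff hsne).1 hxs
      have hyy₀ : dist y y₀ ≤ Metric.diam s :=
        dist_le_diam_of_mem isBounded_of_compactSpace hy hy₀s
      refine ⟨hxA, ?_⟩
      calc infDist x (orbSet K' y₀) ≤ dist x y₀ :=
            infDist_le_dist_of_mem (mem_orbSet_self K' y₀)
        _ ≤ dist x y + dist y y₀ := dist_triangle x y y₀
        _ < ε/100 + ε/100 := by linarith [hsd, hxy, hyy₀]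
        _ < ε/8 := by linarith

end Stmt17

namespace Stmt17

variable {F : Type*} [Group F] [Finite F] {Z : Type*} [MetricSpace Z] [CompactSpace Z]
  [MulAction F Z]

lemma dist_smul_smul (hiso : ∀ g : F, Isometry fun z : Z => g • z) (a b : F) (z : Z) :
    dist (a • z) (b • z) = dist ((b⁻¹ * a) • z) z := by
  conv_lhs => rw [show a • z = b • ((b⁻¹ * a) • z) by rw [← mul_smul]; group]
  conv_lhs => rw [show b • z = b • z from rfl]
  rw [dist_smul_eq hiso b]

lemma dist_inv_smul (hiso : ∀ g : F, Isometry fun z : Z => g • z) (g : F) (z : Z) :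
    dist (g⁻¹ • z) z = dist (g • z) z := by
  rw [← dist_smul_eq hiso g (g⁻¹ • z) z, smul_inv_smul, dist_comm]

/-- The gap lemma: at a point which is moved at least `2σ` by some element of `K`,
there is a proper subgroup `H` of `K` and a radius `r` such that elements of `H` move
the point by at most `r`, while elements of `K \ H` move it by more than `2r`. -/
lemma gap (hiso : ∀ g : F, Isometry fun z : Z => g • z) (K : Subgroup F) (z₀ : Z) (σ : ℝ)
    (hσ : 0 < σ) (hsh : ∃ g ∈ K, 2*σ ≤ dist (g • z₀) z₀) :
    ∃ (r : ℝ) (H : Subgroup F), 0 < r ∧ H ≤ K ∧ Nat.card H < Nat.card K ∧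
      (∀ g ∈ H, dist (g • z₀) z₀ ≤ r) ∧ (∀ g ∈ K, g ∉ H → 2*r < dist (g • z₀) z₀) := by
  classical
  set NF := Nat.card F with hNF
  -- find an empty annulus
  have hgap : ∃ i : ℕ, i ≤ NF ∧ ∀ g ∈ K, dist (g • z₀) z₀ ∉ Set.Ioc (σ/2^(i+1)) (σ/2^i) := by
    by_contra hno
    push_neg at hno
    have hex : ∀ i : Fin (NF+1), ∃ g : F, g ∈ K ∧
        dist (g • z₀) z₀ ∈ Set.Ioc (σ/2^((i:ℕ)+1)) (σ/2^(i:ℕ)) := by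
      intro i
      obtain ⟨g, hg, hgd⟩ := hno i (Nat.lt_succ_iff.1 i.isLt)
      exact ⟨g, hg, hgd⟩
    choose f hfK hfd using hex
    have hinj : Function.Injective f := by
      have key : ∀ i j : Fin (NF+1), i < j → f i ≠ f j := by
        intro i j hij heq
        have h1 := hfd i
        have h2 := hfd j
        rw [heq] at h1
        have hle : σ/2^((j:ℕ)) ≤ σ/2^((i:ℕ)+1) := by
          apply div_le_div_of_nonneg_left (le_of_lt hσ) (by positivity)
          apply pow_le_pow_right₀ (by norm_num)
          exact hij
        have := h1.1
        have := h2.2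
        linarith
      intro i j heq
      rcases lt_trichotomy i j with h | h | h
      · exact absurd heq (key i j h)
      · exact h
      · exact absurd heq.symm (key j i h)
    have hcard : NF + 1 ≤ Nat.card F := by
      calc NF + 1 = Nat.card (Fin (NF+1)) := by simp [Nat.card_eq_fintype_card]
        _ ≤ Nat.card F := Nat.card_le_card_of_injective f hinj
    omega
  obtain ⟨i, hi, hann⟩ := hgap
  set r := σ/2^(i+1) with hr
  have hrpos : 0 < r := by positivity
  have h2r : σ/2^i = 2*r := by
    rw [hr]
    rw [pow_succ]
    field_simp
  have hrle : r ≤ σ/2 := by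
    rw [hr]
    apply div_le_div_of_nonneg_left (le_of_lt hσ) (by norm_num)
    calc (2:ℝ) = 2^1 := by norm_num
      _ ≤ 2^(i+1) := by
        apply pow_le_pow_right₀ (by norm_num)
        omega
  -- define the subgroup
  have hmul : ∀ a b : F, a ∈ K ∧ dist (a • z₀) z₀ ≤ r → b ∈ K ∧ dist (b • z₀) z₀ ≤ r →
      (a*b) ∈ K ∧ dist ((a*b) • z₀) z₀ ≤ r := by
    rintro a b ⟨haK, had⟩ ⟨hbK, hbd⟩
    refine ⟨K.mul_mem haK hbK, ?_⟩
    have htri : dist ((a*b) • z₀) z₀ ≤ dist (b • z₀) z₀ + dist (a • z₀) z₀ := by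
      calc dist ((a*b) • z₀) z₀ ≤ dist ((a*b) • z₀) (a • z₀) + dist (a • z₀) z₀ :=
            dist_triangle _ _ _
        _ = dist (b • z₀) z₀ + dist (a • z₀) z₀ := by
            rw [mul_smul, dist_smul_eq hiso]
    have hle2 : dist ((a*b) • z₀) z₀ ≤ 2*r := by linarith
    have := hann (a*b) (K.mul_mem haK hbK)
    rw [h2r] at this
    simp only [Set.mem_Ioc, not_and, not_le] at this
    by_contra hcon
    push_neg at hcon
    have := this hcon
    linarith
  set H : Subgroup F := {
    carrier := {g : F | g ∈ K ∧ dist (g • z₀) z₀ ≤ r}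
    mul_mem' := fun ha hb => hmul _ _ ha hb
    one_mem' := ⟨K.one_mem, by simp [le_of_lt hrpos]⟩
    inv_mem' := by
      rintro g ⟨hgK, hgd⟩
      exact ⟨K.inv_mem hgK, by rw [dist_inv_smul hiso]; exact hgd⟩ } with hH
  have hmemH : ∀ g : F, g ∈ H ↔ (g ∈ K ∧ dist (g • z₀) z₀ ≤ r) := fun g => Iff.rfl
  obtain ⟨gs, hgsK, hgsd⟩ := hsh
  have hgsH : gs ∉ H := by
    rw [hmemH]
    rintro ⟨-, hle⟩
    linarith
  refine ⟨r, H, hrpos, ?_, ?_, ?_, ?_⟩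
  · intro g hg; exact ((hmemH g).1 hg).1
  · -- cardinality
    have hsub : (H : Set F) ⊂ (K : Set F) := by
      constructor
      · intro g hg; exact ((hmemH g).1 hg).1
      · intro hcon
        exact hgsH (hcon hgsK)
    have h1 : Nat.card H = (H : Set F).ncard := (Nat.card_coe_set_eq _)
    have h2 : Nat.card K = (K : Set F).ncard := (Nat.card_coe_set_eq _)
    rw [h1, h2]
    exact Set.ncard_lt_ncard hsub (Set.toFinite _)
  · intro g hg; exact ((hmemH g).1 hg).2
  · intro g hgK hgH
    have hgr : r < dist (g • z₀) z₀ := by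
      by_contra hcon
      push_neg at hcon
      exact hgH ((hmemH g).2 ⟨hgK, hcon⟩)
    have := hann g hgK
    rw [h2r] at this
    simp only [Set.mem_Ioc, not_and, not_le] at this
    exact this hgr

end Stmt17

namespace Stmt17

variable {F : Type*} [Group F] [Finite F] {Z : Type*} [MetricSpace Z] [CompactSpace Z]
  [MulAction F Z] {n : ℕ}

/-- The deep piece: near points with small `K`-displacement, there is an equivariant
piece-cover by invariant sets. -/
lemma deepPiece (hiso : ∀ g : F, Isometry fun z : Z => g • z) (hdim : CoverDimLE Z n)
    (K : Subgroup F) (A : Set Z) (hA : IsClosed A) (hAinv : ∀ g ∈ K, g • A = A)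
    (L : ℝ) (hL : 0 < L) :
    ∃ (lam : ℝ) (Ap : Set Z) (ℳ : Set (Set Z)) (q : ℝ),
      0 < lam ∧
      Ap = {z | z ∈ A ∧ ∀ g ∈ K, dist (g • z) z ≤ lam/8} ∧
      0 < q ∧ q ≤ L/9 ∧
      IsClosed Ap ∧ Ap ⊆ A ∧ (∀ g ∈ K, g • Ap = Ap) ∧
      (∀ m ∈ ℳ, m.Nonempty ∧ m ⊆ Ap ∧ (∃ O, IsOpen O ∧ m = O ∩ Ap) ∧ Metric.diam m < L/9) ∧
      (∀ g ∈ K, ∀ m ∈ ℳ, g • m ∈ ℳ) ∧ (Ap ⊆ ⋃₀ ℳ) ∧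
      (∀ z : Z, {m | m ∈ ℳ ∧ z ∈ m}.encard ≤ (n:ℕ∞) + 1) ∧
      (∀ K' : Subgroup F, K' ≤ K → ∀ t, t ⊆ Ap → t.Nonempty → (∀ g ∈ K', g • t = t) →
        Metric.diam t < q →
        ∃ m ∈ ℳ, (∀ g ∈ K', g • m = m) ∧ ∀ x ∈ Ap, Metric.infDist x t < q → x ∈ m) := by
  classical
  -- refine the cover by balls of radius L/36
  obtain ⟨V, hVopen, hVcover, hVref, hVmult⟩ := hdim {b | ∃ x : Z, b = Metric.ball x (L/36)}
    (by rintro u ⟨x, rfl⟩; exact isOpen_ball)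
    (by
      apply Subset.antisymm (subset_univ _)
      intro z _
      exact ⟨Metric.ball z (L/36), ⟨z, rfl⟩, Metric.mem_ball_self (by linarith)⟩)
  -- Lebesgue number
  have hcov : (univ : Set Z) ⊆ ⋃ v : ↥V, (v : Set Z) := by
    rw [← Set.sUnion_eq_iUnion, hVcover]
  obtain ⟨lam₀, hlam₀, hleb₀⟩ := lebesgue_number_lemma_of_metric isCompact_univ
    (fun v : ↥V => hVopen v v.2) hcov
  set lam := min lam₀ (L/36) with hlam
  have hlampos : 0 < lam := lt_min hlam₀ (by linarith)
  have hlamle : lam ≤ L/36 := min_le_right _ _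
  have hleb : ∀ x : Z, ∃ v ∈ V, Metric.ball x lam ⊆ v := by
    intro x
    obtain ⟨v, hv⟩ := hleb₀ x (mem_univ x)
    exact ⟨v, v.2, Subset.trans (Metric.ball_subset_ball (min_le_left _ _)) hv⟩
  set Ap : Set Z := {z | z ∈ A ∧ ∀ g ∈ K, dist (g • z) z ≤ lam/8} with hAp
  have hApA : Ap ⊆ A := fun z hz => hz.1
  have hApcl : IsClosed Ap := by
    have : Ap = A ∩ ⋂ g ∈ (K : Set F), {z | dist (g • z) z ≤ lam/8} := by
      ext z
      simp only [hAp, Set.mem_setOf_eq, Set.mem_inter_iff, Set.mem_iInter, SetLike.mem_coe]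
    rw [this]
    apply hA.inter
    apply isClosed_biInter
    intro g _
    exact isClosed_le (Continuous.dist (hiso g).continuous continuous_id) continuous_const
  have hAmem : ∀ g ∈ K, ∀ x, x ∈ A → g • x ∈ A := by
    intro g hg x hx
    rw [← hAinv g hg]; exact smul_mem_smul_set hx
  have hApmem : ∀ g ∈ K, ∀ x, x ∈ Ap → g • x ∈ Ap := by
    rintro g hg x ⟨hxA, hxd⟩
    refine ⟨hAmem g hg x hxA, ?_⟩
    intro k hk
    have : dist (k • g • x) (g • x) = dist ((g⁻¹ * k * g) • x) x := by
      rw [← mul_smul, dist_smul_smul hiso (k*g) g x]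
      congr 2
      group
    rw [this]
    exact hxd _ (K.mul_mem (K.mul_mem (K.inv_mem hg) hk) hg)
  have hApinv : ∀ g ∈ K, g • Ap = Ap := by
    intro g hg
    apply Subset.antisymm
    · rintro x ⟨y, hy, rfl⟩
      exact hApmem g hg y hy
    · intro x hx
      refine ⟨g⁻¹ • x, hApmem g⁻¹ (K.inv_mem hg) x hx, by simp⟩
  -- the invariant saturation sets
  set hw : Set Z → Set Z := fun v => {z | z ∈ Ap ∧ ∀ g ∈ K, g • z ∈ v} with hhw
  set ℳ : Set (Set Z) := {m | ∃ v ∈ V, m = hw v ∧ m.Nonempty} with hℳ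
  have hhw_sub : ∀ v, hw v ⊆ v := by
    intro v z hz
    have := hz.2 1 K.one_mem
    simpa using this
  have hhw_subAp : ∀ v, hw v ⊆ Ap := fun v z hz => hz.1
  have hhw_inv : ∀ g ∈ K, ∀ v, g • hw v = hw v := by
    intro g hg v
    apply Subset.antisymm
    · rintro x ⟨y, ⟨hyAp, hyv⟩, rfl⟩
      refine ⟨hApmem g hg y hyAp, ?_⟩
      intro k hk
      rw [← mul_smul]
      exact hyv _ (K.mul_mem hk hg)
    · intro x hx
      refine ⟨g⁻¹ • x, ⟨hApmem g⁻¹ (K.inv_mem hg) x hx.1, ?_⟩, by simp⟩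
      intro k hk
      rw [← mul_smul]
      exact hx.2 _ (K.mul_mem hk (K.inv_mem hg))
  refine ⟨lam, Ap, ℳ, lam/32, hlampos, rfl, by positivity, by linarith, hApcl, hApA, hApinv,
    ?_, ?_, ?_, ?_, ?_⟩
  · -- member properties
    rintro m ⟨v, hv, rfl, hne⟩
    refine ⟨hne, hhw_subAp v, ?_, ?_⟩
    · refine ⟨⋂ g ∈ (K : Set F), (fun z : Z => g • z) ⁻¹' v, ?_, ?_⟩
      · apply Set.Finite.isOpen_biInter (Set.toFinite _)
        intro g _
        exact (hVopen v hv).preimage (hiso g).continuous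
      · ext z
        simp only [hhw, Set.mem_setOf_eq, Set.mem_inter_iff, Set.mem_iInter, Set.mem_preimage,
          SetLike.mem_coe]
        tauto
    · obtain ⟨u, hu, hvu⟩ := hVref v hv
      obtain ⟨x, rfl⟩ := hu
      calc Metric.diam (hw v) ≤ Metric.diam (Metric.ball x (L/36)) :=
            diam_mono (Subset.trans (hhw_sub v) hvu) isBounded_of_compactSpace
        _ ≤ 2 * (L/36) := diam_ball (by linarith)
        _ < L/9 := by linarith
  · -- equivariance
    rintro g hg m ⟨v, hv, rfl, hne⟩
    rw [hhw_inv g hg v]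
    exact ⟨v, hv, rfl, hne⟩
  · -- cover
    intro z hz
    obtain ⟨v, hv, hball⟩ := hleb z
    have hzm : z ∈ hw v := by
      refine ⟨hz, ?_⟩
      intro g hg
      apply hball
      rw [mem_ball]
      calc dist (g • z) z ≤ lam/8 := hz.2 g hg
        _ < lam := by linarith
    exact ⟨hw v, ⟨v, hv, rfl, ⟨z, hzm⟩⟩, hzm⟩
  · -- multiplicity
    intro z
    have hsub : {m | m ∈ ℳ ∧ z ∈ m} ⊆ hw '' {v | v ∈ V ∧ z ∈ v} := by
      rintro m ⟨⟨v, hv, rfl, hne⟩, hzm⟩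
      exact ⟨v, ⟨hv, hhw_sub v hzm⟩, rfl⟩
    calc {m | m ∈ ℳ ∧ z ∈ m}.encard ≤ {v | v ∈ V ∧ z ∈ v}.encard :=
          encard_le_of_sub_image hw hsub
      _ ≤ (n:ℕ∞) + 1 := hVmult z
  · -- P2
    intro K' hK' t htAp htne htstab htd
    set x₀ := htne.some with hx₀
    have hx₀t : x₀ ∈ t := htne.some_mem
    have hx₀Ap : x₀ ∈ Ap := htAp hx₀t
    obtain ⟨v, hv, hball⟩ := hleb x₀
    have hmem_m : ∀ x ∈ Ap, Metric.infDist x t < lam/32 → x ∈ hw v := by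
      intro x hxAp hxt
      refine ⟨hxAp, ?_⟩
      intro g hg
      apply hball
      rw [mem_ball]
      obtain ⟨y, hy, hxy⟩ := (infDist_lt_iff htne).1 hxt
      have hyx₀ : dist y x₀ ≤ Metric.diam t :=
        dist_le_diam_of_mem isBounded_of_compactSpace hy hx₀t
      calc dist (g • x) x₀ ≤ dist (g • x) x + dist x y + dist y x₀ := dist_triangle4 _ _ _ _
        _ ≤ lam/8 + dist x y + dist y x₀ := by linarith [hxAp.2 g hg]
        _ < lam/8 + lam/32 + lam/32 := by linarith [htd]
        _ < lam := by linarith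
    have hx₀m : x₀ ∈ hw v := hmem_m x₀ hx₀Ap (by
      rw [infDist_zero_of_mem hx₀t]; positivity)
    refine ⟨hw v, ⟨v, hv, rfl, ⟨x₀, hx₀m⟩⟩, ?_, hmem_m⟩
    intro g hg
    exact hhw_inv g (hK' hg) v

end Stmt17

namespace Stmt17

variable {F : Type*} [Group F] [Finite F] {Z : Type*} [MetricSpace Z] [CompactSpace Z]
  [MulAction F Z] {n : ℕ}

/-- The combination step: given a current equivariant margin-adapted cover of `A`
with multiplicity `≤ n+1` on `T`, and a piece-cover of a closed invariant piece `Ap`,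
produce a shrinking with multiplicity `≤ n+1` on `T ∪ Ap`, still margin-adapted. -/
lemma step (hiso : ∀ g : F, Isometry fun z : Z => g • z)
    (K : Subgroup F) (A : Set Z) (hAinv : ∀ g ∈ K, g • A = A)
    (𝒲 : Set (Set Z)) (L : ℝ) (hL : 0 < L)
    (hWro : ∀ w ∈ 𝒲, ∃ O, IsOpen O ∧ w = O ∩ A)
    (hWequi : ∀ g ∈ K, ∀ w ∈ 𝒲, g • w ∈ 𝒲)
    (hWcover : A ⊆ ⋃₀ 𝒲)
    (hWMA : MA K A 𝒲 L)
    (T : Set Z) (hT : ∀ z ∈ T, {w | w ∈ 𝒲 ∧ z ∈ w}.encard ≤ (n:ℕ∞)+1)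
    (Ap : Set Z) (hApcl : IsClosed Ap) (hApA : Ap ⊆ A) (hApinv : ∀ g ∈ K, g • Ap = Ap)
    (ℳ : Set (Set Z)) (q : ℝ) (hq : 0 < q) (hqL : q ≤ L/9)
    (hM : ∀ m ∈ ℳ, m.Nonempty ∧ m ⊆ Ap ∧ (∃ O, IsOpen O ∧ m = O ∩ Ap) ∧ Metric.diam m < L/9)
    (hMequi : ∀ g ∈ K, ∀ m ∈ ℳ, g • m ∈ ℳ)
    (hMcover : Ap ⊆ ⋃₀ ℳ)
    (hMmult : ∀ z : Z, {m | m ∈ ℳ ∧ z ∈ m}.encard ≤ (n:ℕ∞)+1)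
    (hP2 : ∀ K' : Subgroup F, K' ≤ K → ∀ t, t ⊆ Ap → t.Nonempty → (∀ g ∈ K', g • t = t) →
      Metric.diam t < q →
      ∃ m ∈ ℳ, (∀ g ∈ K', g • m = m) ∧ ∀ x ∈ Ap, Metric.infDist x t < q → x ∈ m) :
    ∃ 𝒲' : Set (Set Z),
      (∀ w ∈ 𝒲', ∃ O, IsOpen O ∧ w = O ∩ A) ∧
      (∀ g ∈ K, ∀ w ∈ 𝒲', g • w ∈ 𝒲') ∧
      (A ⊆ ⋃₀ 𝒲') ∧
      (∀ w' ∈ 𝒲', ∃ w ∈ 𝒲, w' ⊆ w) ∧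
      (∀ z ∈ T ∪ Ap, {w | w ∈ 𝒲' ∧ z ∈ w}.encard ≤ (n:ℕ∞)+1) ∧
      MA K A 𝒲' (q/32) := by
  classical
  have hAmem : ∀ g ∈ K, ∀ x, x ∈ A → g • x ∈ A := fun g hg x hx => by
    rw [← hAinv g hg]; exact smul_mem_smul_set hx
  have hApmem : ∀ g ∈ K, ∀ x, x ∈ Ap → g • x ∈ Ap := fun g hg x hx => by
    rw [← hApinv g hg]; exact smul_mem_smul_set hx
  have hApiff : ∀ g ∈ K, ∀ x : Z, (g⁻¹ • x ∈ Ap ↔ x ∈ Ap) := by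
    intro g hg x
    constructor
    · intro h; have := hApmem g hg _ h; simpa using this
    · intro h; exact hApmem g⁻¹ (K.inv_mem hg) x h
  -- ===== orbits and representatives =====
  set orb : Set Z → Set (Set Z) := fun m => {m' | ∃ g ∈ K, m' = g • m} with horbdef
  have horbself : ∀ m, m ∈ orb m := fun m => ⟨1, K.one_mem, (one_smul F m).symm⟩
  have horbeq : ∀ m, ∀ g ∈ K, orb (g • m) = orb m := by
    intro m g hg
    ext m'
    constructor
    · rintro ⟨g', hg', rfl⟩
      exact ⟨g' * g, K.mul_mem hg' hg, by rw [mul_smul]⟩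
    · rintro ⟨g', hg', rfl⟩
      refine ⟨g' * g⁻¹, K.mul_mem hg' (K.inv_mem hg), ?_⟩
      rw [mul_smul, inv_smul_smul]
  set RepS : Set (Set Z) → Set Z := fun S => if h : S.Nonempty then h.some else ∅ with hRepS
  set Rep : Set Z → Set Z := fun m => RepS (orb m) with hRepdef
  have hRepOrb : ∀ m, Rep m ∈ orb m := by
    intro m
    have hne : (orb m).Nonempty := ⟨m, horbself m⟩
    show RepS (orb m) ∈ orb m
    rw [hRepS]
    simp only [dif_pos hne]
    exact hne.some_mem
  have hRepEq : ∀ m, ∀ g ∈ K, Rep (g • m) = Rep m := by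
    intro m g hg
    show RepS (orb (g • m)) = RepS (orb m)
    rw [horbeq m g hg]
  -- ===== parents =====
  have hex0 : ∀ m₀ : Set Z, ∃ w : Set Z, m₀ ∈ ℳ →
      (w ∈ 𝒲 ∧ (∀ g ∈ K, g • m₀ = m₀ → g • w = w) ∧
        (∀ x ∈ A, Metric.infDist x m₀ < L → x ∈ w)) := by
    intro m₀
    by_cases h : m₀ ∈ ℳ
    · obtain ⟨hne, hsub, hro, hdiam⟩ := hM m₀ h
      obtain ⟨w, hw, hwstab, hwmarg⟩ := hWMA (K ⊓ MulAction.stabilizer F m₀) inf_le_left m₀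
        (hsub.trans hApA) hne
        (fun g hg => MulAction.mem_stabilizer_iff.mp (Subgroup.mem_inf.mp hg).2)
        (by linarith)
      refine ⟨w, fun _ => ⟨hw, ?_, hwmarg⟩⟩
      intro g hgK hgm
      exact hwstab g (Subgroup.mem_inf.mpr ⟨hgK, MulAction.mem_stabilizer_iff.mpr hgm⟩)
    · exact ⟨∅, fun hc => absurd hc h⟩
  choose P0 hP0 using hex0
  have hRepM : ∀ m ∈ ℳ, Rep m ∈ ℳ := by
    intro m hm
    obtain ⟨g, hg, hr⟩ := hRepOrb m
    rw [hr]; exact hMequi g hg m hm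
  set P : Set Z → Set Z := fun m => if h : ∃ g, g ∈ K ∧ Rep m = g • m then
    (h.choose)⁻¹ • P0 (Rep m) else ∅ with hPdef
  have hexτ : ∀ m : Set Z, m ∈ ℳ → ∃ g, g ∈ K ∧ Rep m = g • m := by
    intro m hm
    obtain ⟨g, hg, hr⟩ := hRepOrb m
    exact ⟨g, hg, hr⟩
  have hkey : ∀ m ∈ ℳ, ∀ g₁, g₁ ∈ K → Rep m = g₁ • m → P m = g₁⁻¹ • P0 (Rep m) := by
    intro m hm g₁ hg₁ hr₁
    have hexg : ∃ g, g ∈ K ∧ Rep m = g • m := ⟨g₁, hg₁, hr₁⟩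
    show (if h : ∃ g, g ∈ K ∧ Rep m = g • m then (h.choose)⁻¹ • P0 (Rep m) else ∅)
      = g₁⁻¹ • P0 (Rep m)
    have main : ∀ g₀, g₀ ∈ K → Rep m = g₀ • m →
        g₀⁻¹ • P0 (Rep m) = g₁⁻¹ • P0 (Rep m) := by
      intro g₀ hg₀K hr₀
      have hcK : (g₁ * g₀⁻¹) ∈ K := K.mul_mem hg₁ (K.inv_mem hg₀K)
      have hcr : (g₁ * g₀⁻¹) • Rep m = Rep m := by
        rw [mul_smul]
        have h1 : g₀⁻¹ • Rep m = m := by rw [hr₀, inv_smul_smul]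
        rw [h1, ← hr₁]
      have hstab := (hP0 (Rep m) (hRepM m hm)).2.1 _ hcK hcr
      have hgr : g₁⁻¹ * (g₁ * g₀⁻¹) = g₀⁻¹ := by group
      calc g₀⁻¹ • P0 (Rep m)
          = (g₁⁻¹ * (g₁ * g₀⁻¹)) • P0 (Rep m) := by rw [hgr]
        _ = g₁⁻¹ • ((g₁ * g₀⁻¹) • P0 (Rep m)) := by rw [mul_smul]
        _ = g₁⁻¹ • P0 (Rep m) := by rw [hstab]
    rw [dif_pos hexg]
    exact main hexg.choose hexg.choose_spec.1 hexg.choose_spec.2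
  have hPW : ∀ m ∈ ℳ, P m ∈ 𝒲 := by
    intro m hm
    obtain ⟨g₁, hg₁, hr₁⟩ := hexτ m hm
    rw [hkey m hm g₁ hg₁ hr₁]
    exact hWequi g₁⁻¹ (K.inv_mem hg₁) _ ((hP0 _ (hRepM m hm)).1)
  have hPmarg : ∀ m ∈ ℳ, ∀ x ∈ A, Metric.infDist x m < L → x ∈ P m := by
    intro m hm x hx hxm
    obtain ⟨g₁, hg₁, hr₁⟩ := hexτ m hm
    rw [hkey m hm g₁ hg₁ hr₁, mem_smul_set_iff_inv_smul_mem, inv_inv]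
    apply (hP0 _ (hRepM m hm)).2.2
    · exact hAmem g₁ hg₁ x hx
    · rw [hr₁, infDist_smul hiso]
      exact hxm
  have hPsub : ∀ m ∈ ℳ, m ⊆ P m := by
    intro m hm x hx
    apply hPmarg m hm x (hApA ((hM m hm).2.1 hx))
    rw [infDist_zero_of_mem hx]
    exact hL
  have hPequi : ∀ g ∈ K, ∀ m ∈ ℳ, P (g • m) = g • P m := by
    intro g hg m hm
    obtain ⟨g₁, hg₁, hr₁⟩ := hexτ m hm
    have hr' : Rep (g • m) = (g₁ * g⁻¹) • (g • m) := by
      rw [hRepEq m g hg, mul_smul, inv_smul_smul, hr₁]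
    rw [hkey (g • m) (hMequi g hg m hm) (g₁ * g⁻¹) (K.mul_mem hg₁ (K.inv_mem hg)) hr',
      hRepEq m g hg, hkey m hm g₁ hg₁ hr₁]
    rw [mul_inv_rev, inv_inv, mul_smul]
  -- ===== canonical extensions =====
  set extO : Set Z → Set Z := fun m => {x | EMetric.infEdist x m < ENNReal.ofReal (q/4) ∧
    EMetric.infEdist x m < EMetric.infEdist x (Ap \ m)} with hextdef
  have hext_open : ∀ m, IsOpen (extO m) := by
    intro m
    have heq : extO m = {x : Z | EMetric.infEdist x m < ENNReal.ofReal (q/4)} ∩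
        {x : Z | EMetric.infEdist x m < EMetric.infEdist x (Ap \ m)} := by
      ext x; simp [hextdef]
    rw [heq]
    exact (isOpen_lt EMetric.continuous_infEdist continuous_const).inter
      (isOpen_lt EMetric.continuous_infEdist EMetric.continuous_infEdist)
  have hApm_closed : ∀ m ∈ ℳ, IsClosed (Ap \ m) := by
    intro m hm
    obtain ⟨O, hO, hmO⟩ := (hM m hm).2.2.1
    have : Ap \ m = Ap ∩ Oᶜ := by
      rw [hmO]; ext x
      simp only [Set.mem_diff, Set.mem_inter_iff, Set.mem_compl_iff]
      tauto
    rw [this]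
    exact hApcl.inter (isClosed_compl_iff.mpr hO)
  have hext_mem : ∀ m ∈ ℳ, ∀ x ∈ m, x ∈ extO m := by
    intro m hm x hx
    refine ⟨?_, ?_⟩
    · rw [show EMetric.infEdist x m = 0 from Metric.infEDist_zero_of_mem hx]
      exact ENNReal.ofReal_pos.mpr (by positivity)
    · rw [show EMetric.infEdist x m = 0 from Metric.infEDist_zero_of_mem hx]
      show (0:ENNReal) < Metric.infEDist x (Ap \ m)
      rw [Metric.infEDist_pos_iff_notMem_closure, (hApm_closed m hm).closure_eq]
      exact fun hc => hc.2 hx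
  have hext_cap : ∀ m ∈ ℳ, extO m ∩ Ap = m := by
    intro m hm
    apply Subset.antisymm
    · rintro x ⟨⟨h1, h2⟩, hxAp⟩
      by_contra hxm
      have h0 : EMetric.infEdist x (Ap \ m) = 0 :=
        EMetric.infEdist_zero_of_mem (show x ∈ Ap \ m from ⟨hxAp, hxm⟩)
      rw [h0] at h2
      simp at h2
    · intro x hx
      exact ⟨hext_mem m hm x hx, (hM m hm).2.1 hx⟩
  have hext_equi : ∀ g ∈ K, ∀ m, extO (g • m) = g • extO m := by
    intro g hg m
    ext x
    rw [mem_smul_set_iff_inv_smul_mem]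
    show (EMetric.infEdist x (g • m) < ENNReal.ofReal (q/4) ∧
      EMetric.infEdist x (g • m) < EMetric.infEdist x (Ap \ g • m)) ↔ _
    have hd : Ap \ g • m = g • (Ap \ m) := by rw [smul_set_sdiff, hApinv g hg]
    rw [infEdist_smul' hiso g x m, hd, infEdist_smul' hiso g x (Ap \ m)]
    exact Iff.rfl
  -- ===== the modification map =====
  set Fm : Set Z → Set Z := fun w =>
    (w \ Ap) ∪ ⋃ m ∈ {m' | m' ∈ ℳ ∧ P m' = w}, (extO m ∩ w) with hFmdef
  have hFm_sub : ∀ w, Fm w ⊆ w := by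
    intro w
    apply Set.union_subset Set.diff_subset
    exact Set.iUnion₂_subset (fun m hm => Set.inter_subset_right)
  have hFm_mem_iff : ∀ w x, x ∈ Fm w ↔
      ((x ∈ w ∧ x ∉ Ap) ∨ ∃ m, (m ∈ ℳ ∧ P m = w) ∧ x ∈ extO m ∧ x ∈ w) := by
    intro w x
    show x ∈ (w \ Ap) ∪ ⋃ m ∈ {m' | m' ∈ ℳ ∧ P m' = w}, (extO m ∩ w) ↔ _
    simp only [Set.mem_union, Set.mem_diff, Set.mem_iUnion, Set.mem_inter_iff,
      Set.mem_setOf_eq, exists_prop]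
  have hFm_equi : ∀ g ∈ K, ∀ w, Fm (g • w) = g • Fm w := by
    intro g hg w
    ext x
    rw [mem_smul_set_iff_inv_smul_mem, hFm_mem_iff, hFm_mem_iff]
    have hxw : x ∈ g • w ↔ g⁻¹ • x ∈ w := mem_smul_set_iff_inv_smul_mem
    constructor
    · rintro (⟨h1, h2⟩ | ⟨m, ⟨hmM, hmP⟩, hxe, hxw'⟩)
      · left
        exact ⟨hxw.mp h1, fun hc => h2 ((hApiff g hg x).mp hc)⟩
      · right
        refine ⟨g⁻¹ • m, ⟨hMequi g⁻¹ (K.inv_mem hg) m hmM, ?_⟩, ?_, hxw.mp hxw'⟩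
        · rw [hPequi g⁻¹ (K.inv_mem hg) m hmM, hmP, inv_smul_smul]
        · have : extO (g⁻¹ • m) = g⁻¹ • extO m := hext_equi g⁻¹ (K.inv_mem hg) m
          rw [this, mem_smul_set_iff_inv_smul_mem, inv_inv]
          rwa [show g • g⁻¹ • x = x by simp]
    · rintro (⟨h1, h2⟩ | ⟨m, ⟨hmM, hmP⟩, hxe, hxw'⟩)
      · left
        refine ⟨hxw.mpr h1, fun hc => h2 ?_⟩
        exact (hApiff g hg x).mpr hc
      · right
        refine ⟨g • m, ⟨hMequi g hg m hmM, ?_⟩, ?_, hxw.mpr hxw'⟩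
        · rw [hPequi g hg m hmM, hmP]
        · rw [hext_equi g hg m, mem_smul_set_iff_inv_smul_mem]
          exact hxe
  refine ⟨Fm '' 𝒲, ?_, ?_, ?_, ?_, ?_, ?_⟩
  · -- relatively open
    rintro w' ⟨w, hw, rfl⟩
    obtain ⟨O, hO, hwO⟩ := hWro w hw
    refine ⟨(O ∩ Apᶜ) ∪ ⋃ m ∈ {m' | m' ∈ ℳ ∧ P m' = w}, (extO m ∩ O), ?_, ?_⟩
    · refine IsOpen.union (hO.inter hApcl.isOpen_compl) ?_
      exact isOpen_biUnion (fun m hm => (hext_open m).inter hO)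
    · ext x
      rw [hFm_mem_iff]
      simp only [Set.mem_inter_iff, Set.mem_union, Set.mem_compl_iff, Set.mem_iUnion,
        Set.mem_setOf_eq, exists_prop, hwO, Set.mem_inter_iff]
      tauto
  · -- equivariance
    rintro g hg w' ⟨w, hw, rfl⟩
    exact ⟨g • w, hWequi g hg w hw, hFm_equi g hg w⟩
  · -- cover
    intro z hz
    by_cases hzAp : z ∈ Ap
    · obtain ⟨m, hmM, hzm⟩ := hMcover hzAp
      refine ⟨Fm (P m), ⟨P m, hPW m hmM, rfl⟩, ?_⟩
      rw [hFm_mem_iff]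
      exact Or.inr ⟨m, ⟨hmM, rfl⟩, hext_mem m hmM z hzm, hPsub m hmM hzm⟩
    · obtain ⟨w, hw, hzw⟩ := hWcover hz
      refine ⟨Fm w, ⟨w, hw, rfl⟩, ?_⟩
      rw [hFm_mem_iff]
      exact Or.inl ⟨hzw, hzAp⟩
  · -- refinement
    rintro w' ⟨w, hw, rfl⟩
    exact ⟨w, hw, hFm_sub w⟩
  · -- multiplicity
    intro z hz
    by_cases hzAp : z ∈ Ap
    · have hsub : {w | w ∈ Fm '' 𝒲 ∧ z ∈ w} ⊆ (fun m => Fm (P m)) '' {m | m ∈ ℳ ∧ z ∈ m} := by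
        rintro w' ⟨⟨w, hw, rfl⟩, hzw'⟩
        rw [hFm_mem_iff] at hzw'
        rcases hzw' with ⟨-, hc⟩ | ⟨m, ⟨hmM, hmP⟩, hze, hzw⟩
        · exact absurd hzAp hc
        · have hzm : z ∈ m := by
            have hmem : z ∈ extO m ∩ Ap := ⟨hze, hzAp⟩
            rwa [hext_cap m hmM] at hmem
          refine ⟨m, ⟨hmM, hzm⟩, ?_⟩
          show Fm (P m) = Fm w
          rw [hmP]
      exact le_trans (encard_le_of_sub_image _ hsub) (hMmult z)
    · have hzT : z ∈ T := hz.resolve_right hzAp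
      have hsub : {w | w ∈ Fm '' 𝒲 ∧ z ∈ w} ⊆ Fm '' {w | w ∈ 𝒲 ∧ z ∈ w} := by
        rintro w' ⟨⟨w, hw, rfl⟩, hzw'⟩
        exact ⟨w, ⟨hw, hFm_sub w hzw'⟩, rfl⟩
      exact le_trans (encard_le_of_sub_image _ hsub) (hT z hzT)
  · -- margin-adaptedness
    intro K' hK' s hsA hsne hstab hsd
    by_cases hcase : ∃ x₀ ∈ s, ∃ a ∈ Ap, dist x₀ a ≤ q/16
    · -- near the piece: use P2
      obtain ⟨x₀, hx₀s, a, haAp, hda⟩ := hcase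
      set t : Set Z := {b | b ∈ Ap ∧ Metric.infDist b s ≤ q/8} with htdef
      have hat : a ∈ t := by
        refine ⟨haAp, ?_⟩
        calc Metric.infDist a s ≤ dist a x₀ := infDist_le_dist_of_mem hx₀s
          _ = dist x₀ a := dist_comm a x₀
          _ ≤ q/8 := by linarith
      have htAp : t ⊆ Ap := fun b hb => hb.1
      have htne : t.Nonempty := ⟨a, hat⟩
      have htmem : ∀ g ∈ K', ∀ b ∈ t, g • b ∈ t := by
        rintro g hg b ⟨hbAp, hbs⟩
        refine ⟨hApmem g (hK' hg) b hbAp, ?_⟩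
        calc Metric.infDist (g • b) s = Metric.infDist (g • b) (g • s) := by rw [hstab g hg]
          _ = Metric.infDist b s := infDist_smul hiso g b s
          _ ≤ q/8 := hbs
      have htstab : ∀ g ∈ K', g • t = t := by
        intro g hg
        apply Subset.antisymm
        · rintro x ⟨b, hb, rfl⟩
          exact htmem g hg b hb
        · intro b hb
          exact ⟨g⁻¹ • b, htmem g⁻¹ (K'.inv_mem hg) b hb, by simp⟩
      have htd : Metric.diam t < q := by
        have hbd : ∀ b ∈ t, ∀ b' ∈ t, dist b b' ≤ q/2 := by
          rintro b ⟨-, hb⟩ b' ⟨-, hb'⟩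
          obtain ⟨y, hy, hby⟩ := (infDist_lt_iff hsne).1
            (show Metric.infDist b s < q/8 + q/100 by linarith)
          obtain ⟨y', hy', hby'⟩ := (infDist_lt_iff hsne).1
            (show Metric.infDist b' s < q/8 + q/100 by linarith)
          have hyy' : dist y y' ≤ Metric.diam s :=
            dist_le_diam_of_mem isBounded_of_compactSpace hy hy'
          have hcomm : dist y' b' = dist b' y' := dist_comm _ _
          calc dist b b' ≤ dist b y + dist y y' + dist y' b' := dist_triangle4 _ _ _ _
            _ ≤ (q/8 + q/100) + Metric.diam s + (q/8 + q/100) := by linarith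
            _ ≤ (q/8 + q/100) + q/32 + (q/8 + q/100) := by linarith [hsd]
            _ ≤ q/2 := by linarith
        calc Metric.diam t ≤ q/2 := diam_le_of_forall_dist_le (by positivity) hbd
          _ < q := by linarith
      obtain ⟨m, hmM, hmstab, hmmarg⟩ := hP2 K' hK' t htAp htne htstab htd
      have htm : t ⊆ m := by
        intro b hb
        apply hmmarg b (htAp hb)
        rw [infDist_zero_of_mem hb]
        exact hq
      refine ⟨Fm (P m), ⟨P m, hPW m hmM, rfl⟩, ?_, ?_⟩
      · intro g hg
        calc g • Fm (P m) = Fm (g • P m) := (hFm_equi g (hK' hg) (P m)).symm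
          _ = Fm (P (g • m)) := by rw [hPequi g (hK' hg) m hmM]
          _ = Fm (P m) := by rw [hmstab g hg]
      · intro x hxA hxs
        obtain ⟨y, hy, hxy⟩ := (infDist_lt_iff hsne).1 hxs
        have hyx₀ : dist y x₀ ≤ Metric.diam s :=
          dist_le_diam_of_mem isBounded_of_compactSpace hy hx₀s
        have hxa : dist x a < q/8 := by
          calc dist x a ≤ dist x y + dist y x₀ + dist x₀ a := dist_triangle4 _ _ _ _
            _ < q/32 + q/32 + q/16 := by linarith [hsd]
            _ = q/8 := by ring
        have ham : a ∈ m := htm hat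
        have hxm_lt : EMetric.infEdist x m < ENNReal.ofReal (q/4) := by
          calc EMetric.infEdist x m ≤ edist x a := EMetric.infEdist_le_edist_of_mem ham
            _ = ENNReal.ofReal (dist x a) := edist_dist x a
            _ < ENNReal.ofReal (q/4) := by
                rw [ENNReal.ofReal_lt_ofReal_iff (by positivity)]
                linarith
        have hlow : ENNReal.ofReal (q/2) ≤ EMetric.infEdist x (Ap \ m) := by
          show _ ≤ Metric.infEDist x (Ap \ m)
          rw [Metric.le_infEDist]
          intro b hb
          have hbt : ¬ (Metric.infDist b t < q) := by
            intro hc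
            exact hb.2 (hmmarg b hb.1 hc)
          push_neg at hbt
          have hba : q ≤ dist b a := le_trans hbt (infDist_le_dist_of_mem hat)
          have hxb : q/2 ≤ dist x b := by
            have := dist_triangle b x a
            have hc := dist_comm b x
            nlinarith
          rw [edist_dist]
          exact ENNReal.ofReal_le_ofReal hxb
        have hxe : x ∈ extO m := by
          refine ⟨hxm_lt, lt_of_lt_of_le ?_ hlow⟩
          calc EMetric.infEdist x m < ENNReal.ofReal (q/4) := hxm_lt
            _ ≤ ENNReal.ofReal (q/2) := ENNReal.ofReal_le_ofReal (by linarith)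
        have hxP : x ∈ P m := by
          apply hPmarg m hmM x hxA
          calc Metric.infDist x m ≤ dist x a := infDist_le_dist_of_mem ham
            _ < q/8 := hxa
            _ < L := by linarith
        rw [hFm_mem_iff]
        exact Or.inr ⟨m, ⟨hmM, rfl⟩, hxe, hxP⟩
    · -- far from the piece: use the old family
      push_neg at hcase
      obtain ⟨w, hw, hwstab, hwmarg⟩ := hWMA K' hK' s hsA hsne hstab
        (lt_of_lt_of_le hsd (by linarith))
      refine ⟨Fm w, ⟨w, hw, rfl⟩, ?_, ?_⟩
      · intro g hg
        calc g • Fm w = Fm (g • w) := (hFm_equi g (hK' hg) w).symm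
          _ = Fm w := by rw [hwstab g hg]
      · intro x hxA hxs
        have hxw : x ∈ w := hwmarg x hxA (lt_of_lt_of_le hxs (by linarith))
        have hxAp : x ∉ Ap := by
          intro hc
          obtain ⟨y, hy, hxy⟩ := (infDist_lt_iff hsne).1 hxs
          have := hcase y hy x hc
          have hd := dist_comm y x
          linarith
        rw [hFm_mem_iff]
        exact Or.inl ⟨hxw, hxAp⟩

end Stmt17

namespace Stmt17

variable {F : Type*} [Group F] [Finite F] {Z : Type*} [MetricSpace Z] [CompactSpace Z]
  [MulAction F Z] {n : ℕ}

theorem main (hiso : ∀ g : F, Isometry fun z : Z => g • z) (hdim : CoverDimLE Z n) :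
    ∀ (N : ℕ) (K : Subgroup F), Nat.card K ≤ N →
    ∀ (A : Set Z), IsClosed A → (∀ g ∈ K, g • A = A) →
    ∀ (𝒰 : Set (Set Z)) (L : ℝ), 0 < L →
    (∀ u ∈ 𝒰, ∃ O, IsOpen O ∧ u = O ∩ A) →
    (∀ g ∈ K, ∀ u ∈ 𝒰, g • u ∈ 𝒰) →
    MA K A 𝒰 L →
    ∃ 𝒲 : Set (Set Z),
      (∀ w ∈ 𝒲, ∃ O, IsOpen O ∧ w = O ∩ A) ∧
      (∀ g ∈ K, ∀ w ∈ 𝒲, g • w ∈ 𝒲) ∧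
      (A ⊆ ⋃₀ 𝒲) ∧
      (∀ w ∈ 𝒲, ∃ u ∈ 𝒰, w ⊆ u) ∧
      (∀ z : Z, {w | w ∈ 𝒲 ∧ z ∈ w}.encard ≤ (n:ℕ∞)+1) ∧
      ∃ L' : ℝ, 0 < L' ∧ MA K A 𝒲 L' := by
  intro N
  induction N with
  | zero =>
      intro K hK
      exfalso
      have hpos : 0 < Nat.card K := @Nat.card_pos _ ⟨(1 : K)⟩ _
      omega
  | succ N ih =>
      intro K hK A hA hAinv 𝒰 L hL hUro hUequi hUMA
      classical
      have hAmem : ∀ g ∈ K, ∀ x, x ∈ A → g • x ∈ A := fun g hg x hx => by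
        rw [← hAinv g hg]; exact smul_mem_smul_set hx
      -- ===== deep piece and first step =====
      obtain ⟨lam, Ap₀, ℳ₀, q₀, hlam, hApdef, hq₀, hq₀L, hApcl, hApA, hApinv,
        hM₀, hM₀equi, hM₀cover, hM₀mult, hP2₀⟩ := deepPiece hiso hdim K A hA hAinv L hL
      have hUcover : A ⊆ ⋃₀ 𝒰 := MA.cover hL hUMA
      obtain ⟨𝒲₁, hW₁ro, hW₁equi, hW₁cover, hW₁ref, hW₁mult, hW₁MA⟩ :=
        step hiso K A hAinv 𝒰 L hL hUro hUequi hUcover hUMA ∅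
          (fun z hz => absurd hz (Set.notMem_empty z)) Ap₀ hApcl hApA hApinv
          ℳ₀ q₀ hq₀ hq₀L hM₀ hM₀equi hM₀cover hM₀mult hP2₀
      -- ===== the shallow set =====
      set S : Set Z := {z | z ∈ A ∧ ∃ g ∈ K, lam/8 ≤ dist (g • z) z} with hSdef
      have hSA : S ⊆ A := fun z hz => hz.1
      have hScl : IsClosed S := by
        have hrw : S = A ∩ ⋃ g ∈ (K : Set F), {z | lam/8 ≤ dist (g • z) z} := by
          ext z
          simp only [hSdef, mem_setOf_eq, mem_inter_iff, mem_iUnion, SetLike.mem_coe,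
            exists_prop]
        rw [hrw]
        exact hA.inter (Set.Finite.isClosed_biUnion (Set.toFinite _) (fun g _ =>
          isClosed_le continuous_const (Continuous.dist (hiso g).continuous continuous_id)))
      have hAsub : A ⊆ Ap₀ ∪ S := by
        intro z hz
        by_cases hc : ∀ g ∈ K, dist (g • z) z ≤ lam/8
        · left; rw [hApdef]; exact ⟨hz, hc⟩
        · right
          push_neg at hc
          obtain ⟨g, hg, hgt⟩ := hc
          exact ⟨hz, g, hg, le_of_lt hgt⟩
      -- ===== bundle data =====
      have hdata : ∀ z₀ : Z, z₀ ∈ S → ∃ (r : ℝ) (H : Subgroup F), 0 < r ∧ H ≤ K ∧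
          Nat.card H ≤ N ∧ (∀ g ∈ H, dist (g • z₀) z₀ ≤ r) ∧
          (∀ g ∈ K, g ∉ H → 2*r < dist (g • z₀) z₀) := by
        intro z₀ hz₀
        obtain ⟨-, g, hg, hge⟩ := hz₀
        obtain ⟨r, H, hr, hHK, hcard, hHle, hHgt⟩ := gap hiso K z₀ (lam/16) (by linarith)
          ⟨g, hg, by rw [show 2*(lam/16) = lam/8 by ring]; exact hge⟩
        have hKN : Nat.card K ≤ N + 1 := hK
        exact ⟨r, H, hr, hHK, by omega, hHle, hHgt⟩
      choose! rr HH hrpos hHK hHcard hHle hHgt using hdata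
      set Nb : Z → Set Z := fun z₀ => {y | y ∈ A ∧ Metric.infDist y (orbSet (HH z₀) z₀) ≤ rr z₀ / 8}
        with hNbdef
      set ApB : Z → Set Z := fun z₀ => ⋃ g ∈ (K : Set F), g • Nb z₀ with hApBdef
      have horbH_ne : ∀ z₀ : Z, (orbSet (HH z₀) z₀).Nonempty := fun z₀ => orbSet_nonempty _ _
      have horbH_cpt : ∀ z₀ : Z, IsCompact (orbSet (HH z₀) z₀) :=
        fun z₀ => (orbSet_finite _ _).isCompact
      have hNbA : ∀ z₀, Nb z₀ ⊆ A := fun z₀ y hy => hy.1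
      have hNbcl : ∀ z₀, IsClosed (Nb z₀) :=
        fun z₀ => hA.inter (isClosed_le (continuous_infDist_pt _) continuous_const)
      have hNbHinv : ∀ z₀ ∈ S, ∀ g ∈ HH z₀, g • Nb z₀ = Nb z₀ := by
        intro z₀ hz₀ g hg
        have hmm : ∀ g' ∈ HH z₀, ∀ y ∈ Nb z₀, g' • y ∈ Nb z₀ := by
          intro g' hg' y hy
          refine ⟨hAmem g' (hHK z₀ hz₀ hg') y hy.1, ?_⟩
          have heq : Metric.infDist (g' • y) (orbSet (HH z₀) z₀)
              = Metric.infDist y (orbSet (HH z₀) z₀) := by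
            conv_lhs => rw [← smul_orbSet g' (HH z₀) z₀ hg']
            exact infDist_smul hiso g' y (orbSet (HH z₀) z₀)
          rw [heq]; exact hy.2
        apply Subset.antisymm
        · rintro x ⟨y, hy, rfl⟩
          exact hmm g hg y hy
        · intro y hy
          exact ⟨g⁻¹ • y, hmm g⁻¹ ((HH z₀).inv_mem hg) y hy, by simp⟩
      have hApBcl : ∀ z₀, IsClosed (ApB z₀) :=
        fun z₀ => Set.Finite.isClosed_biUnion (Set.toFinite _)
          (fun g _ => isClosed_smul_set hiso g (hNbcl z₀))
      have hApBmem : ∀ z₀ (x : Z), x ∈ ApB z₀ ↔ ∃ g ∈ K, g⁻¹ • x ∈ Nb z₀ := by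
        intro z₀ x
        simp only [hApBdef, mem_iUnion, SetLike.mem_coe, exists_prop,
          mem_smul_set_iff_inv_smul_mem]
      have hApBA : ∀ z₀, ApB z₀ ⊆ A := by
        intro z₀ x hx
        obtain ⟨g, hg, hy⟩ := (hApBmem z₀ x).1 hx
        have := hAmem g hg _ (hNbA z₀ hy)
        simpa using this
      have hmemApB : ∀ z₀, ∀ g ∈ K, ∀ y ∈ Nb z₀, g • y ∈ ApB z₀ := by
        intro z₀ g hg y hy
        rw [hApBmem]
        exact ⟨g, hg, by simpa using hy⟩
      have hcomp : ∀ z₀, ∀ x ∈ ApB z₀, ∃ g ∈ K, x ∈ g • Nb z₀ := by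
        intro z₀ x hx
        obtain ⟨g, hg, hy⟩ := (hApBmem z₀ x).1 hx
        exact ⟨g, hg, mem_smul_set_iff_inv_smul_mem.mpr hy⟩
      have hApBinv : ∀ z₀, ∀ g ∈ K, g • ApB z₀ = ApB z₀ := by
        intro z₀ g hg
        ext x
        rw [mem_smul_set_iff_inv_smul_mem, hApBmem, hApBmem]
        constructor
        · rintro ⟨g', hg', hx⟩
          refine ⟨g * g', K.mul_mem hg hg', ?_⟩
          rw [mul_inv_rev, mul_smul]
          exact hx
        · rintro ⟨g', hg', hx⟩
          refine ⟨g⁻¹ * g', K.mul_mem (K.inv_mem hg) hg', ?_⟩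
          rw [mul_inv_rev, mul_smul, inv_inv, smul_inv_smul]
          exact hx
      -- ===== separation of bundle components =====
      have hsep : ∀ z₀ ∈ S, ∀ g ∈ K, ∀ g' ∈ K, g'⁻¹ * g ∉ HH z₀ →
          ∀ x ∈ g • Nb z₀, ∀ x' ∈ g' • Nb z₀, 2 * rr z₀ - rr z₀/4 ≤ dist x x' := by
        intro z₀ hz₀ g hg g' hg' hgH x hx x' hx'
        obtain ⟨y, hy, rfl⟩ := hx
        obtain ⟨y', hy', rfl⟩ := hx'
        obtain ⟨p, hp, hyp⟩ := (horbH_cpt z₀).exists_infDist_eq_dist (horbH_ne z₀) y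
        obtain ⟨p', hp', hyp'⟩ := (horbH_cpt z₀).exists_infDist_eq_dist (horbH_ne z₀) y'
        obtain ⟨h, hh, rfl⟩ := hp
        obtain ⟨h', hh', rfl⟩ := hp'
        have hdyp : dist y (h • z₀) ≤ rr z₀ / 8 := by rw [← hyp]; exact hy.2
        have hdyp' : dist y' (h' • z₀) ≤ rr z₀ / 8 := by rw [← hyp']; exact hy'.2
        have hcK : (g' * h')⁻¹ * (g * h) ∈ K :=
          K.mul_mem (K.inv_mem (K.mul_mem hg' (hHK z₀ hz₀ hh')))
            (K.mul_mem hg (hHK z₀ hz₀ hh))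
        have hcH : (g' * h')⁻¹ * (g * h) ∉ HH z₀ := by
          intro hc
          apply hgH
          have : g'⁻¹ * g = h' * ((g' * h')⁻¹ * (g * h)) * h⁻¹ := by group
          rw [this]
          exact (HH z₀).mul_mem ((HH z₀).mul_mem hh' hc) ((HH z₀).inv_mem hh)
        have hfar : 2 * rr z₀ < dist ((g*h) • z₀) ((g'*h') • z₀) := by
          rw [dist_smul_smul hiso (g*h) (g'*h') z₀]
          exact hHgt z₀ hz₀ _ hcK hcH
        have h1 : dist (g • y) ((g*h) • z₀) ≤ rr z₀/8 := by
          rw [mul_smul, dist_smul_eq hiso]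
          exact hdyp
        have h2 : dist (g' • y') ((g'*h') • z₀) ≤ rr z₀/8 := by
          rw [mul_smul, dist_smul_eq hiso]
          exact hdyp'
        have htr : dist ((g*h) • z₀) ((g'*h') • z₀) ≤
            dist ((g*h) • z₀) (g • y) + dist (g • y) (g' • y') + dist (g' • y') ((g'*h') • z₀) :=
          dist_triangle4 _ _ _ _
        have hc1 : dist ((g*h) • z₀) (g • y) = dist (g • y) ((g*h) • z₀) := dist_comm _ _
        linarith
      have hcu : ∀ z₀ ∈ S, ∀ x : Z, ∀ g ∈ K, ∀ g' ∈ K, x ∈ g • Nb z₀ → x ∈ g' • Nb z₀ →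
          g'⁻¹ * g ∈ HH z₀ := by
        intro z₀ hz₀ x g hg g' hg' hx hx'
        by_contra hc
        have := hsep z₀ hz₀ g hg g' hg' hc x hx x hx'
        rw [dist_self] at this
        have := hrpos z₀ hz₀
        linarith
      have hgNb_eq : ∀ z₀ ∈ S, ∀ g ∈ K, ∀ g' ∈ K, g'⁻¹ * g ∈ HH z₀ →
          g • Nb z₀ = g' • Nb z₀ := by
        intro z₀ hz₀ g hg g' hg' hH
        have : g • Nb z₀ = g' • ((g'⁻¹ * g) • Nb z₀) := by
          rw [← mul_smul]
          congr 1
          group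
        rw [this, hNbHinv z₀ hz₀ _ hH]
      -- ===== bundle piece covers via the induction hypothesis =====
      have pieceB : ∀ z₀ ∈ S, ∀ Lc : ℝ, 0 < Lc → ∃ (ℳB : Set (Set Z)) (qB : ℝ),
          0 < qB ∧ qB ≤ Lc/9 ∧
          (∀ m ∈ ℳB, m.Nonempty ∧ m ⊆ ApB z₀ ∧ (∃ O, IsOpen O ∧ m = O ∩ ApB z₀) ∧
            Metric.diam m < Lc/9) ∧
          (∀ g ∈ K, ∀ m ∈ ℳB, g • m ∈ ℳB) ∧ (ApB z₀ ⊆ ⋃₀ ℳB) ∧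
          (∀ z : Z, {m | m ∈ ℳB ∧ z ∈ m}.encard ≤ (n:ℕ∞)+1) ∧
          (∀ K' : Subgroup F, K' ≤ K → ∀ t, t ⊆ ApB z₀ → t.Nonempty →
            (∀ g ∈ K', g • t = t) → Metric.diam t < qB →
            ∃ m ∈ ℳB, (∀ g ∈ K', g • m = m) ∧
              ∀ x ∈ ApB z₀, Metric.infDist x t < qB → x ∈ m) := by
        intro z₀ hz₀ Lc hLc
        have hr0 : 0 < rr z₀ := hrpos z₀ hz₀
        set εin := min (Lc/9) (rr z₀/8) with hεin
        have hεpos : 0 < εin := lt_min (by linarith) (by linarith)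
        obtain ⟨𝒪, hOro, hOequi, hOdiam, hOMA⟩ :=
          orbitBall hiso (HH z₀) (Nb z₀) (hNbHinv z₀ hz₀) εin hεpos
        obtain ⟨𝒱, hVro, hVequi, hVcover, hVref, hVmult, L', hL', hVMA⟩ :=
          ih (HH z₀) (hHcard z₀ hz₀) (Nb z₀) (hNbcl z₀) (hNbHinv z₀ hz₀) 𝒪 (εin/100)
            (by positivity) hOro hOequi hOMA
        have hVsub : ∀ v ∈ 𝒱, v ⊆ Nb z₀ := by
          intro v hv
          obtain ⟨O, hO, rfl⟩ := hVro v hv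
          exact inter_subset_right
        have hVdiam : ∀ v ∈ 𝒱, Metric.diam v < εin := by
          intro v hv
          obtain ⟨u, hu, hvu⟩ := hVref v hv
          exact lt_of_le_of_lt (diam_mono hvu isBounded_of_compactSpace) (hOdiam u hu)
        set ℳB : Set (Set Z) := {m | ∃ g ∈ K, ∃ v ∈ 𝒱, m = g • v ∧ m.Nonempty} with hℳB
        set qB := min L' (min (rr z₀/100) (Lc/9)) with hqB
        have hqBpos : 0 < qB := lt_min hL' (lt_min (by linarith) (by linarith))
        have hqBL' : qB ≤ L' := min_le_left _ _
        have hqBr : qB ≤ rr z₀/100 := le_trans (min_le_right _ _) (min_le_left _ _)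
        have hqBLc : qB ≤ Lc/9 := le_trans (min_le_right _ _) (min_le_right _ _)
        refine ⟨ℳB, qB, hqBpos, hqBLc, ?_, ?_, ?_, ?_, ?_⟩
        · -- member properties
          rintro m ⟨g, hg, v, hv, rfl, hne⟩
          obtain ⟨O, hO, hvO⟩ := hVro v hv
          refine ⟨hne, ?_, ?_, ?_⟩
          · intro x hx
            obtain ⟨y, hy, rfl⟩ := hx
            exact hmemApB z₀ g hg y (hVsub v hv hy)
          · -- relatively open in ApB z₀
            refine ⟨(g • O) ∩ (⋃ g' ∈ {g' | g' ∈ (K : Set F) ∧ g'⁻¹ * g ∉ HH z₀},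
              g' • Nb z₀)ᶜ, ?_, ?_⟩
            · refine (isOpen_smul_set hiso g hO).inter (isClosed_compl_iff.mp ?_)
              rw [compl_compl]
              refine Set.Finite.isClosed_biUnion ?_ (fun g' _ => isClosed_smul_set hiso g' (hNbcl z₀))
              exact Set.Finite.subset (Set.toFinite (K : Set F)) (fun g' hg' => hg'.1)
            · apply Subset.antisymm
              · rintro x hx
                obtain ⟨y, hy, rfl⟩ := hx
                have hyv := hy
                refine ⟨⟨?_, ?_⟩, ?_⟩
                · rw [hvO] at hyv
                  exact smul_mem_smul_set hyv.1
                · intro hc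
                  simp only [mem_iUnion, mem_setOf_eq, exists_prop] at hc
                  obtain ⟨g', ⟨hg'K, hg'H⟩, hxg'⟩ := hc
                  exact hg'H (hcu z₀ hz₀ (g • y) g hg g' hg'K
                    (smul_mem_smul_set (hVsub v hv hy)) hxg')
                · exact hmemApB z₀ g hg y (hVsub v hv hy)
              · rintro x ⟨⟨hxO, hxC⟩, hxApB⟩
                obtain ⟨g'', hg'', hxg''⟩ := hcomp z₀ x hxApB
                have hg''H : g''⁻¹ * g ∈ HH z₀ := by
                  by_contra hc
                  apply hxC
                  simp only [mem_iUnion, mem_setOf_eq, exists_prop]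
                  exact ⟨g'', ⟨hg'', hc⟩, hxg''⟩
                have hxgNb : x ∈ g • Nb z₀ := by
                  rw [hgNb_eq z₀ hz₀ g hg g'' hg'' hg''H]
                  exact hxg''
                rw [mem_smul_set_iff_inv_smul_mem] at hxO hxgNb ⊢
                rw [hvO]
                exact ⟨hxO, hxgNb⟩
          · rw [diam_smul hiso]
            exact lt_of_lt_of_le (hVdiam v hv) (min_le_left _ _)
        · -- equivariance
          rintro g' hg' m ⟨g, hg, v, hv, rfl, hne⟩
          refine ⟨g' * g, K.mul_mem hg' hg, v, hv, by rw [mul_smul], ?_⟩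
          obtain ⟨x, hx⟩ := hne
          exact ⟨g' • x, smul_mem_smul_set hx⟩
        · -- cover
          intro x hx
          obtain ⟨g, hg, hxg⟩ := hcomp z₀ x hx
          rw [mem_smul_set_iff_inv_smul_mem] at hxg
          obtain ⟨v, hv, hgv⟩ := hVcover hxg
          refine ⟨g • v, ⟨g, hg, v, hv, rfl, ⟨x, ?_⟩⟩, ?_⟩
          · rw [mem_smul_set_iff_inv_smul_mem]; exact hgv
          · rw [mem_smul_set_iff_inv_smul_mem]; exact hgv
        · -- multiplicity
          intro z
          by_cases hzB : z ∈ ApB z₀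
          · obtain ⟨g₀, hg₀, hzg₀⟩ := hcomp z₀ z hzB
            have hsub : {m | m ∈ ℳB ∧ z ∈ m} ⊆
                (fun v => g₀ • v) '' {v | v ∈ 𝒱 ∧ g₀⁻¹ • z ∈ v} := by
              rintro m ⟨⟨g, hg, v, hv, rfl, hne⟩, hzm⟩
              have hzgNb : z ∈ g • Nb z₀ := by
                obtain ⟨y, hy, rfl⟩ := hzm
                exact smul_mem_smul_set (hVsub v hv hy)
              have hH : g₀⁻¹ * g ∈ HH z₀ := hcu z₀ hz₀ z g hg g₀ hg₀ hzgNb hzg₀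
              refine ⟨(g₀⁻¹ * g) • v, ⟨hVequi _ hH v hv, ?_⟩, ?_⟩
              · rw [mul_smul, mem_smul_set_iff_inv_smul_mem]
                simpa using hzm
              · show g₀ • ((g₀⁻¹ * g) • v) = g • v
                rw [← mul_smul]
                congr 1
                group
            calc {m | m ∈ ℳB ∧ z ∈ m}.encard ≤ {v | v ∈ 𝒱 ∧ g₀⁻¹ • z ∈ v}.encard :=
                  encard_le_of_sub_image _ hsub
              _ ≤ (n:ℕ∞)+1 := hVmult _
          · have hemp : {m | m ∈ ℳB ∧ z ∈ m} = ∅ := by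
              ext m
              simp only [mem_setOf_eq, mem_empty_iff_false, iff_false, not_and]
              rintro ⟨g, hg, v, hv, rfl, hne⟩ hzm
              apply hzB
              obtain ⟨y, hy, rfl⟩ := hzm
              exact hmemApB z₀ g hg y (hVsub v hv hy)
            rw [hemp]
            simp
        · -- P2
          intro K' hK' t htApB htne htstab htd
          set x₀ := htne.some with hx₀def
          have hx₀t : x₀ ∈ t := htne.some_mem
          obtain ⟨g₀, hg₀, hx₀g₀⟩ := hcomp z₀ x₀ (htApB hx₀t)
          have htcomp : t ⊆ g₀ • Nb z₀ := by
            intro x hx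
            obtain ⟨g', hg', hxg'⟩ := hcomp z₀ x (htApB hx)
            have hxx₀ : dist x x₀ ≤ Metric.diam t :=
              dist_le_diam_of_mem isBounded_of_compactSpace hx hx₀t
            have hH : g₀⁻¹ * g' ∈ HH z₀ := by
              by_contra hc
              have := hsep z₀ hz₀ g' hg' g₀ hg₀ hc x hxg' x₀ hx₀g₀
              have hr0' := hrpos z₀ hz₀
              have : (2:ℝ) * rr z₀ - rr z₀/4 ≤ dist x x₀ := this
              linarith [htd, hqBr]
            rw [hgNb_eq z₀ hz₀ g' hg' g₀ hg₀ hH] at hxg'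
            exact hxg'
          have hKconj : ∀ k ∈ K', g₀⁻¹ * k * g₀ ∈ HH z₀ := by
            intro k hk
            have hkx₀ : k • x₀ ∈ t := by
              rw [← htstab k hk]
              exact smul_mem_smul_set hx₀t
            have h1 : k • x₀ ∈ g₀ • Nb z₀ := htcomp hkx₀
            have h2 : k • x₀ ∈ (k * g₀) • Nb z₀ := by
              rw [mul_smul]
              exact smul_mem_smul_set hx₀g₀
            have := hcu z₀ hz₀ (k • x₀) (k * g₀) (K.mul_mem (hK' hk) hg₀) g₀ hg₀ h2 h1
            have heq : g₀⁻¹ * (k * g₀) = g₀⁻¹ * k * g₀ := by group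
            rwa [heq] at this
          -- conjugate subgroup
          set K'' : Subgroup F := {
            carrier := {c | g₀ * c * g₀⁻¹ ∈ K'}
            one_mem' := by simp [K'.one_mem]
            mul_mem' := by
              intro c d hc hd
              have heq : g₀ * (c*d) * g₀⁻¹ = (g₀*c*g₀⁻¹) * (g₀*d*g₀⁻¹) := by group
              show g₀ * (c*d) * g₀⁻¹ ∈ K'
              rw [heq]
              exact K'.mul_mem hc hd
            inv_mem' := by
              intro c hc
              have heq : g₀ * c⁻¹ * g₀⁻¹ = (g₀*c*g₀⁻¹)⁻¹ := by group
              show g₀ * c⁻¹ * g₀⁻¹ ∈ K'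
              rw [heq]
              exact K'.inv_mem hc } with hK''
          have hK''mem : ∀ c : F, c ∈ K'' ↔ g₀ * c * g₀⁻¹ ∈ K' := fun c => Iff.rfl
          have hK''H : K'' ≤ HH z₀ := by
            intro c hc
            have := hKconj (g₀ * c * g₀⁻¹) ((hK''mem c).1 hc)
            have heq : g₀⁻¹ * (g₀ * c * g₀⁻¹) * g₀ = c := by group
            rwa [heq] at this
          set t' := g₀⁻¹ • t with ht'
          have ht'Nb : t' ⊆ Nb z₀ := by
            rintro x ⟨y, hy, rfl⟩
            have := htcomp hy
            rwa [mem_smul_set_iff_inv_smul_mem] at this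
          have ht'ne : t'.Nonempty := ⟨g₀⁻¹ • x₀, smul_mem_smul_set hx₀t⟩
          have ht'd : Metric.diam t' < L' := by
            rw [ht', diam_smul hiso]
            exact lt_of_lt_of_le htd hqBL'
          have ht'stab : ∀ c ∈ K'', c • t' = t' := by
            intro c hc
            have hk := (hK''mem c).1 hc
            rw [ht', ← mul_smul]
            have heq : c * g₀⁻¹ = g₀⁻¹ * (g₀ * c * g₀⁻¹) := by group
            rw [heq, mul_smul, htstab _ hk]
          obtain ⟨v, hv, hvstab, hvmarg⟩ := hVMA K'' hK''H t' ht'Nb ht'ne ht'stab ht'd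
          have ht'v : t' ⊆ v := by
            intro x hx
            exact hvmarg x (ht'Nb hx) (by rw [infDist_zero_of_mem hx]; exact hL')
          refine ⟨g₀ • v, ⟨g₀, hg₀, v, hv, rfl, ?_⟩, ?_, ?_⟩
          · obtain ⟨x, hx⟩ := ht'ne
            exact ⟨g₀ • x, smul_mem_smul_set (ht'v hx)⟩
          · intro k hk
            have hc : g₀⁻¹ * k * g₀ ∈ K'' := by
              rw [hK''mem]
              have heq : g₀ * (g₀⁻¹ * k * g₀) * g₀⁻¹ = k := by group
              rw [heq]
              exact hk
            calc k • g₀ • v = (k * g₀) • v := by rw [mul_smul]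
              _ = (g₀ * (g₀⁻¹ * k * g₀)) • v := by congr 1; group
              _ = g₀ • ((g₀⁻¹ * k * g₀) • v) := by rw [mul_smul]
              _ = g₀ • v := by rw [hvstab _ hc]
          · intro x hxApB hxt
            obtain ⟨g', hg', hxg'⟩ := hcomp z₀ x hxApB
            obtain ⟨y, hy, hxy⟩ := (infDist_lt_iff htne).1 hxt
            have hH : g₀⁻¹ * g' ∈ HH z₀ := by
              by_contra hc
              have hsep' := hsep z₀ hz₀ g' hg' g₀ hg₀ hc x hxg' y (htcomp hy)
              have hr0' := hrpos z₀ hz₀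
              linarith [hqBr]
            rw [hgNb_eq z₀ hz₀ g' hg' g₀ hg₀ hH] at hxg'
            rw [mem_smul_set_iff_inv_smul_mem]
            apply hvmarg (g₀⁻¹ • x) (by rwa [← mem_smul_set_iff_inv_smul_mem])
            have heq : Metric.infDist (g₀⁻¹ • x) t' = Metric.infDist x t := by
              rw [ht']
              exact infDist_smul hiso g₀⁻¹ x t
            rw [heq]
            exact lt_of_lt_of_le hxt hqBL'
      -- ===== finite subcover of the shallow set =====
      have hSsubballs : S ⊆ ⋃ i : ↥S, Metric.ball (i : Z) (rr i / 8) := by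
        intro z hz
        exact Set.mem_iUnion.mpr ⟨⟨z, hz⟩, Metric.mem_ball_self (by
          have := hrpos z hz; linarith)⟩
      obtain ⟨tF, htF⟩ := hScl.isCompact.elim_finite_subcover
        (fun i : ↥S => Metric.ball (i : Z) (rr i / 8)) (fun i => isOpen_ball) hSsubballs
      have hSsub : S ⊆ ⋃ i ∈ tF, ApB (i : Z) := by
        intro z hz
        obtain ⟨i, hi, hzi⟩ := Set.mem_iUnion₂.mp (htF hz)
        refine Set.mem_iUnion₂.mpr ⟨i, hi, ?_⟩
        have hzNb : z ∈ Nb (i : Z) := by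
          refine ⟨hSA hz, ?_⟩
          calc Metric.infDist z (orbSet (HH (i : Z)) (i : Z)) ≤ dist z (i : Z) :=
                infDist_le_dist_of_mem (mem_orbSet_self _ _)
            _ ≤ rr (i : Z) / 8 := le_of_lt (by simpa [Metric.mem_ball] using hzi)
        have := hmemApB (i : Z) 1 K.one_mem z hzNb
        simpa using this
      -- ===== fold over the bundle pieces =====
      have fold : ∀ s : Finset ↥S, ∃ (𝒲c : Set (Set Z)) (Lc : ℝ), 0 < Lc ∧
          (∀ w ∈ 𝒲c, ∃ O, IsOpen O ∧ w = O ∩ A) ∧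
          (∀ g ∈ K, ∀ w ∈ 𝒲c, g • w ∈ 𝒲c) ∧
          (A ⊆ ⋃₀ 𝒲c) ∧
          (∀ w ∈ 𝒲c, ∃ u ∈ 𝒰, w ⊆ u) ∧
          (∀ z ∈ Ap₀ ∪ ⋃ i ∈ s, ApB (i : Z), {w | w ∈ 𝒲c ∧ z ∈ w}.encard ≤ (n:ℕ∞)+1) ∧
          MA K A 𝒲c Lc := by
        intro s
        induction s using Finset.induction_on with
        | empty =>
            refine ⟨𝒲₁, q₀/32, by positivity, hW₁ro, hW₁equi, hW₁cover, ?_, ?_, hW₁MA⟩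
            · intro w hw
              obtain ⟨u, hu, hwu⟩ := hW₁ref w hw
              exact ⟨u, hu, hwu⟩
            · intro z hz
              apply hW₁mult
              simp only [Finset.notMem_empty, iUnion_of_empty, iUnion_empty, union_empty] at hz
              exact Set.mem_union_right _ hz
        | @insert i s his ihs =>
            obtain ⟨𝒲c, Lc, hLc, hcro, hcequi, hccover, hcref, hcmult, hcMA⟩ := ihs
            obtain ⟨ℳB, qB, hqBpos, hqBLc, hMB, hMBequi, hMBcover, hMBmult, hMBP2⟩ :=
              pieceB (i : Z) i.2 Lc hLc
            obtain ⟨𝒲', hW'ro, hW'equi, hW'cover, hW'ref, hW'mult, hW'MA⟩ :=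
              step hiso K A hAinv 𝒲c Lc hLc hcro hcequi hccover hcMA
                (Ap₀ ∪ ⋃ j ∈ s, ApB (j : Z)) hcmult
                (ApB (i : Z)) (hApBcl _) (hApBA _) (hApBinv _)
                ℳB qB hqBpos hqBLc hMB hMBequi hMBcover hMBmult hMBP2
            refine ⟨𝒲', qB/32, by positivity, hW'ro, hW'equi, hW'cover, ?_, ?_, hW'MA⟩
            · intro w hw
              obtain ⟨w', hw', hww'⟩ := hW'ref w hw
              obtain ⟨u, hu, hw'u⟩ := hcref w' hw'
              exact ⟨u, hu, hww'.trans hw'u⟩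
            · intro z hz
              apply hW'mult
              rcases hz with hz | hz
              · exact Or.inl (Or.inl hz)
              · simp only [mem_iUnion, exists_prop] at hz
                obtain ⟨j, hj, hzj⟩ := hz
                rcases Finset.mem_insert.mp hj with rfl | hjs
                · exact Or.inr hzj
                · exact Or.inl (Or.inr (Set.mem_iUnion₂.mpr ⟨j, hjs, hzj⟩))
      obtain ⟨𝒲c, Lc, hLc, hcro, hcequi, hccover, hcref, hcmult, hcMA⟩ := fold tF
      refine ⟨𝒲c, hcro, hcequi, hccover, hcref, ?_, Lc, hLc, hcMA⟩
      intro z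
      by_cases hzA : z ∈ A
      · apply hcmult
        rcases hAsub hzA with hz | hz
        · exact Or.inl hz
        · exact Or.inr (hSsub hz)
      · have hemp : {w | w ∈ 𝒲c ∧ z ∈ w} = ∅ := by
          ext w
          simp only [mem_setOf_eq, mem_empty_iff_false, iff_false, not_and]
          intro hw hzw
          obtain ⟨O, hO, rfl⟩ := hcro w hw
          exact hzA hzw.2
        rw [hemp]
        simp

end Stmt17

theorem stmt_17 {Z : Type*} [MetricSpace Z] [CompactSpace Z]
    {F : Type*} [Group F] [Finite F] [MulAction F Z]
    (hiso : ∀ g : F, Isometry fun z : Z => g • z)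
    {n : ℕ} (hdim : CoverDimLE Z n) (k : ℕ)
    (𝒰 : Set (Set Z)) (hfin : 𝒰.Finite) (hopen : ∀ u ∈ 𝒰, IsOpen u)
    (hequi : ∀ g : F, ∀ u ∈ 𝒰, g • u ∈ 𝒰)
    (hbd : ∀ 𝒰₀ ⊆ 𝒰, (k : ℕ∞) < 𝒰₀.encard → ⋂ u ∈ 𝒰₀, frontier u = ∅) :
    ∀ δ : ℝ, 0 < δ →
      ∃ 𝒲 : Set (Set Z),
        (∀ w ∈ 𝒲, IsOpen w) ∧ ⋃₀ 𝒲 = univ ∧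
        (∀ z : Z, {w ∈ 𝒲 | z ∈ w}.encard ≤ n + 1) ∧
        (∀ w ∈ 𝒲, Metric.diam w < δ) ∧
        (∀ w ∈ 𝒲, {u ∈ 𝒰 | ¬w ⊆ u ∧ (u ∩ w).Nonempty}.encard ≤ k) ∧
        (∀ g : F, ∀ w ∈ 𝒲, g • w ∈ 𝒲) := by
  intro δ hδ
  classical
  rcases isEmpty_or_nonempty Z with hZ | hZ
  · refine ⟨∅, fun w hw => absurd hw (Set.notMem_empty w), ?_, ?_, ?_, ?_, ?_⟩
    · rw [Set.sUnion_empty]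
      exact (Set.univ_eq_empty_iff.mpr hZ).symm
    · intro z; simp
    · intro w hw; exact absurd hw (Set.notMem_empty w)
    · intro w hw; exact absurd hw (Set.notMem_empty w)
    · intro g w hw; exact absurd hw (Set.notMem_empty w)
  -- good radii at every point
  have hr : ∀ z : Z, ∃ r : ℝ, 0 < r ∧ ∀ u ∈ 𝒰, (z ∈ u → Metric.ball z r ⊆ u) ∧
      (z ∉ closure u → Metric.ball z r ∩ u = ∅) := by
    intro z
    have hu : ∀ u : Set Z, ∃ r : ℝ, 0 < r ∧ (u ∈ 𝒰 → ((z ∈ u → Metric.ball z r ⊆ u) ∧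
        (z ∉ closure u → Metric.ball z r ∩ u = ∅))) := by
      intro u
      by_cases huU : u ∈ 𝒰
      · by_cases hzu : z ∈ u
        · obtain ⟨ε, hε, hball⟩ := Metric.isOpen_iff.1 (hopen u huU) z hzu
          exact ⟨ε, hε, fun _ => ⟨fun _ => hball, fun hc => absurd (subset_closure hzu) hc⟩⟩
        · by_cases hzc : z ∈ closure u
          · exact ⟨1, one_pos, fun _ => ⟨fun h => absurd h hzu, fun hc => absurd hzc hc⟩⟩
          · obtain ⟨ε, hε, hball⟩ := Metric.isOpen_iff.1 isClosed_closure.isOpen_compl z hzc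
            refine ⟨ε, hε, fun _ => ⟨fun h => absurd h hzu, fun _ => ?_⟩⟩
            ext x
            simp only [Set.mem_inter_iff, Set.mem_empty_iff_false, iff_false, not_and]
            intro hx hxu
            exact (hball hx) (subset_closure hxu)
      · exact ⟨1, one_pos, fun hc => absurd hc huU⟩
    choose f hf using hu
    by_cases hne : 𝒰.Nonempty
    · have hTne : hfin.toFinset.Nonempty := by
        rwa [Set.Finite.toFinset_nonempty]
      refine ⟨hfin.toFinset.inf' hTne f, ?_, ?_⟩
      · rw [Finset.lt_inf'_iff]
        intro u hu'
        exact (hf u).1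
      · intro u huU
        have hle : hfin.toFinset.inf' hTne f ≤ f u :=
          Finset.inf'_le f (hfin.mem_toFinset.mpr huU)
        obtain ⟨hball, hempty⟩ := (hf u).2 huU
        constructor
        · intro hzu
          exact (Metric.ball_subset_ball hle).trans (hball hzu)
        · intro hzc
          apply Set.eq_empty_of_subset_empty
          rw [← hempty hzc]
          exact Set.inter_subset_inter_left u (Metric.ball_subset_ball hle)
    · exact ⟨1, one_pos, fun u hu => absurd ⟨u, hu⟩ hne⟩
  choose rad hradpos hrad using hr
  -- finite subcover by quarter balls
  have hcov : (univ : Set Z) ⊆ ⋃ z : Z, Metric.ball z (rad z / 4) := by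
    intro z _
    exact Set.mem_iUnion.mpr ⟨z, Metric.mem_ball_self (by linarith [hradpos z])⟩
  obtain ⟨P, hP⟩ := isCompact_univ.elim_finite_subcover _ (fun z : Z => Metric.isOpen_ball) hcov
  have hPne : P.Nonempty := by
    obtain ⟨z⟩ := hZ
    obtain ⟨i, hi, -⟩ := Set.mem_iUnion₂.mp (hP (Set.mem_univ z))
    exact ⟨i, hi⟩
  have hrstarpos : 0 < P.inf' hPne (fun z => rad z / 4) := by
    rw [Finset.lt_inf'_iff]
    intro z hz
    linarith [hradpos z]
  set rstar := P.inf' hPne (fun z => rad z / 4) with hrstardef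
  -- frontier multiplicity bound
  have hfront : ∀ z : Z, {u | u ∈ 𝒰 ∧ z ∈ frontier u}.encard ≤ (k : ℕ∞) := by
    intro z
    by_contra hc
    push_neg at hc
    have h0 := hbd {u | u ∈ 𝒰 ∧ z ∈ frontier u} (fun u hu => hu.1) hc
    have hzmem : z ∈ ⋂ u ∈ {u | u ∈ 𝒰 ∧ z ∈ frontier u}, frontier u :=
      Set.mem_iInter₂.mpr (fun u hu => hu.2)
    rw [h0] at hzmem
    exact hzmem
  -- goodness of small sets
  have hgood : ∀ w : Set Z, w.Nonempty → Metric.diam w < rstar →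
      {u | u ∈ 𝒰 ∧ ¬w ⊆ u ∧ (u ∩ w).Nonempty}.encard ≤ (k:ℕ∞) := by
    intro w hwne hwd
    obtain ⟨y, hy⟩ := hwne
    obtain ⟨zi, hzi, hyzi⟩ := Set.mem_iUnion₂.mp (hP (Set.mem_univ y))
    have hwball : w ⊆ Metric.ball zi (rad zi) := by
      intro x hx
      rw [Metric.mem_ball]
      have h1 : dist x y ≤ Metric.diam w :=
        Metric.dist_le_diam_of_mem Metric.isBounded_of_compactSpace hx hy
      have h2 : dist y zi < rad zi / 4 := by simpa [Metric.mem_ball] using hyzi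
      have h3 : rstar ≤ rad zi / 4 := Finset.inf'_le _ hzi
      calc dist x zi ≤ dist x y + dist y zi := dist_triangle _ _ _
        _ < rad zi := by linarith
    have hsub : {u | u ∈ 𝒰 ∧ ¬w ⊆ u ∧ (u ∩ w).Nonempty} ⊆
        {u | u ∈ 𝒰 ∧ zi ∈ frontier u} := by
      rintro u ⟨huU, hnsub, ⟨p, hpu, hpw⟩⟩
      refine ⟨huU, ?_⟩
      rw [IsOpen.frontier_eq (hopen u huU)]
      constructor
      · by_contra hzc
        have hemp := (hrad zi u huU).2 hzc
        have hp : p ∈ Metric.ball zi (rad zi) ∩ u := ⟨hwball hpw, hpu⟩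
        rw [hemp] at hp
        exact hp
      · intro hzu
        exact hnsub (hwball.trans ((hrad zi u huU).1 hzu))
    exact le_trans (Set.encard_mono hsub) (hfront zi)
  -- apply the main equivariant refinement theorem
  have hεpos : 0 < min δ rstar := lt_min hδ hrstarpos
  obtain ⟨𝒪, hOro, hOequi, hOdiam, hOMA⟩ := Stmt17.orbitBall hiso (⊤ : Subgroup F)
    (univ : Set Z) (fun g _ => Set.smul_set_univ) (min δ rstar) hεpos
  obtain ⟨𝒲, hWro, hWequi, hWcover, hWref, hWmult, -⟩ :=
    Stmt17.main hiso hdim (Nat.card F) ⊤ (Subgroup.card_le_card_group _) univ isClosed_univ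
      (fun g _ => Set.smul_set_univ) 𝒪 ((min δ rstar)/100) (by positivity) hOro hOequi hOMA
  have hWdiam : ∀ w ∈ 𝒲, Metric.diam w < min δ rstar := by
    intro w hw
    obtain ⟨u, hu, hwu⟩ := hWref w hw
    exact lt_of_le_of_lt (Metric.diam_mono hwu Metric.isBounded_of_compactSpace) (hOdiam u hu)
  refine ⟨𝒲, ?_, ?_, ?_, ?_, ?_, ?_⟩
  · intro w hw
    obtain ⟨O, hO, rfl⟩ := hWro w hw
    rw [Set.inter_univ]
    exact hO
  · exact Set.univ_subset_iff.mp hWcover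
  · intro z
    exact hWmult z
  · intro w hw
    exact lt_of_lt_of_le (hWdiam w hw) (min_le_left _ _)
  · intro w hw
    by_cases hwne : w.Nonempty
    · exact hgood w hwne (lt_of_lt_of_le (hWdiam w hw) (min_le_right _ _))
    · rw [Set.not_nonempty_iff_eq_empty] at hwne
      subst hwne
      have : {u ∈ 𝒰 | ¬(∅ : Set Z) ⊆ u ∧ (u ∩ ∅).Nonempty} = ∅ := by
        ext u; simp
      rw [this]
      simp
  · intro g w hw
    exact hWequi g (Subgroup.mem_top g) w hw
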